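/- arXiv:2306.05230 — 10 statements merged into one kernel-verified Lean document; each statement's English description precedes it below -/
import Mathlib

section
/- Let K be a simplicial complex on [m] and, for each i = 1,…,m, let T_i be a simplicial complex on [l_i]. Then the minimal missing faces of the composition complex K(T_1,…,T_m) are exactly the sets ⊔_{i∈L} J_i, where L ranges over the minimal missing faces of K and, for each i ∈ L, J_i ranges over the minimal missing faces of T_i. -/
open scoped Classical

/-- An abstract simplicial complex on the vertex type `V`: a collection of finite
subsets (its faces) containing the empty set and closed under taking subsets. -/
def IsComplex {V : Type*} (K : Set (Finset V)) : Prop :=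
  ∅ ∈ K ∧ ∀ σ ∈ K, ∀ τ ⊆ σ, τ ∈ K

/-- `σ` is a minimal missing face of `K`: it is not a face of `K`, but every proper
subset of it is a face of `K`. -/
def MinNonFace {V : Type*} (K : Set (Finset V)) (σ : Finset V) : Prop :=
  σ ∉ K ∧ ∀ τ ⊂ σ, τ ∈ K

/-- The composition complex `K(T 1, …, T m)`: the simplicial complex on the disjoint
union `[l 1] ⊔ ⋯ ⊔ [l m]` whose faces are the disjoint unions `σ 1 ⊔ ⋯ ⊔ σ m` with
`σ i ⊆ [l i]` for every `i` and `{i | σ i is not a face of T i}` a face of `K`. -/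
def compFaces {m : ℕ} {l : Fin m → ℕ} (K : Set (Finset (Fin m)))
    (T : ∀ i : Fin m, Set (Finset (Fin (l i)))) :
    Set (Finset ((j : Fin m) × Fin (l j))) :=
  {F | ∃ σ : ∀ i : Fin m, Finset (Fin (l i)),
    F = Finset.univ.biUnion (fun i => (σ i).image (Sigma.mk i)) ∧
    (Finset.univ.filter fun i => σ i ∉ T i) ∈ K}


section Helpers
variable {m : ℕ} {l : Fin m → ℕ}

/-- The fiber of `F` over the index `i`. -/
def sigFib (F : Finset ((j : Fin m) × Fin (l j))) (i : Fin m) : Finset (Fin (l i)) :=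
  Finset.univ.filter (fun x => (⟨i, x⟩ : (j : Fin m) × Fin (l j)) ∈ F)

lemma mem_sigFib {F : Finset ((j : Fin m) × Fin (l j))} {i : Fin m} {x : Fin (l i)} :
    x ∈ sigFib F i ↔ (⟨i, x⟩ : (j : Fin m) × Fin (l j)) ∈ F := by
  simp [sigFib]

lemma mem_biUnion_image {S : Finset (Fin m)} {J : ∀ i : Fin m, Finset (Fin (l i))}
    {j : Fin m} {x : Fin (l j)} :
    (⟨j, x⟩ : (i : Fin m) × Fin (l i)) ∈ S.biUnion (fun i => (J i).image (Sigma.mk i)) ↔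
      j ∈ S ∧ x ∈ J j := by
  simp only [Finset.mem_biUnion, Finset.mem_image]
  constructor
  · rintro ⟨i, hi, y, hy, h⟩
    obtain ⟨rfl, h2⟩ := Sigma.mk.inj_iff.mp h
    rw [heq_iff_eq] at h2
    subst h2
    exact ⟨hi, hy⟩
  · rintro ⟨hj, hx⟩
    exact ⟨j, hj, x, hx, rfl⟩

lemma sigFib_biUnion {S : Finset (Fin m)} {J : ∀ i : Fin m, Finset (Fin (l i))} (i : Fin m) :
    sigFib (S.biUnion (fun i => (J i).image (Sigma.mk i))) i = if i ∈ S then J i else ∅ := by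
  ext x
  rw [mem_sigFib, mem_biUnion_image]
  split_ifs with h <;> simp [h]

lemma eq_biUnion_sigFib (F : Finset ((j : Fin m) × Fin (l j))) :
    F = Finset.univ.biUnion (fun i => (sigFib F i).image (Sigma.mk i)) := by
  ext ⟨j, x⟩
  rw [mem_biUnion_image, mem_sigFib]
  simp

lemma mem_compFaces {K : Set (Finset (Fin m))} {T : ∀ i : Fin m, Set (Finset (Fin (l i)))}
    {F : Finset ((j : Fin m) × Fin (l j))} :
    F ∈ compFaces K T ↔ (Finset.univ.filter fun i => sigFib F i ∉ T i) ∈ K := by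
  constructor
  · rintro ⟨σ, rfl, h⟩
    have hfib : ∀ i, sigFib (Finset.univ.biUnion (fun i => (σ i).image (Sigma.mk i))) i = σ i := by
      intro i
      rw [sigFib_biUnion]
      simp
    have : (Finset.univ.filter fun i =>
        sigFib (Finset.univ.biUnion (fun i => (σ i).image (Sigma.mk i))) i ∉ T i) =
        (Finset.univ.filter fun i => σ i ∉ T i) :=
      Finset.filter_congr (fun i _ => by rw [hfib i])
    rwa [this]
  · intro h
    exact ⟨sigFib F, eq_biUnion_sigFib F, h⟩

lemma sigFib_erase_self {F : Finset ((j : Fin m) × Fin (l j))} {i : Fin m} {x : Fin (l i)} :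
    sigFib (F.erase ⟨i, x⟩) i = (sigFib F i).erase x := by
  ext y
  simp only [mem_sigFib, Finset.mem_erase, Ne, Sigma.mk.inj_iff, heq_eq_eq, true_and]

lemma sigFib_erase_ne {F : Finset ((j : Fin m) × Fin (l j))} {i j : Fin m} (h : j ≠ i)
    {x : Fin (l i)} : sigFib (F.erase ⟨i, x⟩) j = sigFib F j := by
  ext y
  simp only [mem_sigFib, Finset.mem_erase, Ne, Sigma.mk.inj_iff, h, false_and, not_false_iff, true_and]

lemma sigFib_mono {F G : Finset ((j : Fin m) × Fin (l j))} (h : G ⊆ F) (i : Fin m) :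
    sigFib G i ⊆ sigFib F i := fun x hx => mem_sigFib.mpr (h (mem_sigFib.mp hx))

end Helpers

/-- The minimal missing faces of the composition complex `K(T 1, …, T m)` are exactly
the disjoint unions `⊔_{i ∈ L} J i` where `L` is a minimal missing face of `K` and,
for each `i ∈ L`, `J i` is a minimal missing face of `T i`. -/
theorem minNonFace_comp {m : ℕ} {l : Fin m → ℕ} (K : Set (Finset (Fin m)))
    (T : ∀ i : Fin m, Set (Finset (Fin (l i))))
    (hK : IsComplex K) (hT : ∀ i, IsComplex (T i))
    (F : Finset ((j : Fin m) × Fin (l j))) :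
    MinNonFace (compFaces K T) F ↔
      ∃ L : Finset (Fin m), MinNonFace K L ∧
        ∃ J : ∀ i : Fin m, Finset (Fin (l i)),
          (∀ i ∈ L, MinNonFace (T i) (J i)) ∧
          F = L.biUnion fun i => (J i).image (Sigma.mk i) := by
  constructor
  · rintro ⟨hF, hmin⟩
    set L : Finset (Fin m) := Finset.univ.filter (fun i => sigFib F i ∉ T i) with hL
    have hLK : L ∉ K := fun h => hF (mem_compFaces.mpr h)
    -- key: removing one vertex from a bad fiber gives a face of `T i`
    have key : ∀ i : Fin m, sigFib F i ∉ T i → ∀ x ∈ sigFib F i,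
        (sigFib F i).erase x ∈ T i := by
      intro i hi x hx
      by_contra hbad
      have hsub : F.erase ⟨i, x⟩ ⊂ F := Finset.erase_ssubset (mem_sigFib.mp hx)
      have h1 := mem_compFaces.mp (hmin _ hsub)
      have heq : (Finset.univ.filter fun j => sigFib (F.erase ⟨i, x⟩) j ∉ T j) = L := by
        apply Finset.filter_congr
        intro j _
        by_cases hji : j = i
        · subst hji
          rw [sigFib_erase_self]
          exact iff_of_true hbad hi
        · rw [sigFib_erase_ne hji]
      exact hLK (heq ▸ h1)
    -- fibers outside L are empty
    have hfib0 : ∀ i, sigFib F i ∈ T i → sigFib F i = ∅ := by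
      intro i hi
      by_contra hne
      obtain ⟨x, hx⟩ := Finset.nonempty_iff_ne_empty.mpr hne
      have hsub : F.erase ⟨i, x⟩ ⊂ F := Finset.erase_ssubset (mem_sigFib.mp hx)
      have h1 := mem_compFaces.mp (hmin _ hsub)
      have heq : (Finset.univ.filter fun j => sigFib (F.erase ⟨i, x⟩) j ∉ T j) = L := by
        apply Finset.filter_congr
        intro j _
        by_cases hji : j = i
        · subst hji
          rw [sigFib_erase_self]
          exact iff_of_false (not_not_intro ((hT _).2 _ hi _ (Finset.erase_subset _ _)))
            (not_not_intro hi)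
        · rw [sigFib_erase_ne hji]
      exact hLK (heq ▸ h1)
    refine ⟨L, ⟨hLK, ?_⟩, sigFib F, ?_, ?_⟩
    · -- minimality of L
      intro M hM
      obtain ⟨i0, hi0L, hi0M⟩ := Finset.exists_of_ssubset hM
      have hi0 : sigFib F i0 ∉ T i0 := (Finset.mem_filter.mp hi0L).2
      have hne : (sigFib F i0).Nonempty := by
        rw [Finset.nonempty_iff_ne_empty]
        intro h
        exact hi0 (h ▸ (hT i0).1)
      obtain ⟨x, hx⟩ := hne
      have hsub : F.erase ⟨i0, x⟩ ⊂ F := Finset.erase_ssubset (mem_sigFib.mp hx)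
      have h1 := mem_compFaces.mp (hmin _ hsub)
      have heq : (Finset.univ.filter fun j => sigFib (F.erase ⟨i0, x⟩) j ∉ T j)
          = L.erase i0 := by
        ext j
        by_cases hji : j = i0
        · subst hji
          simp only [Finset.mem_filter, Finset.mem_univ, true_and, Finset.mem_erase,
            ne_eq, not_true_eq_false, false_and, iff_false, sigFib_erase_self, not_not]
          exact key j hi0 x hx
        · rw [Finset.mem_erase]
          simp only [Finset.mem_filter, Finset.mem_univ, true_and, sigFib_erase_ne hji, hL,
            ne_eq, hji, not_false_iff]
      have hEK : L.erase i0 ∈ K := heq ▸ h1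
      exact hK.2 _ hEK M (Finset.subset_erase.mpr ⟨hM.1, hi0M⟩)
    · -- each fiber over L is a minimal missing face of T i
      intro i hi
      have hi' : sigFib F i ∉ T i := (Finset.mem_filter.mp hi).2
      refine ⟨hi', fun τ hτ => ?_⟩
      obtain ⟨x, hxF, hxτ⟩ := Finset.exists_of_ssubset hτ
      exact (hT i).2 _ (key i hi' x hxF) τ (Finset.subset_erase.mpr ⟨hτ.1, hxτ⟩)
    · -- F is the union of its fibers over L
      conv_lhs => rw [eq_biUnion_sigFib F]
      ext ⟨j, x⟩
      rw [mem_biUnion_image, mem_biUnion_image]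
      simp only [Finset.mem_univ, true_and]
      constructor
      · intro hx
        refine ⟨?_, hx⟩
        by_contra hj
        have : sigFib F j ∈ T j := not_not.mp fun h => hj (Finset.mem_filter.mpr ⟨Finset.mem_univ _, h⟩)
        rw [hfib0 j this] at hx
        exact absurd hx (Finset.notMem_empty x)
      · exact fun h => h.2
  · rintro ⟨L, ⟨hLK, hLmin⟩, J, hJ, rfl⟩
    have hfib : ∀ i, sigFib (L.biUnion fun i => (J i).image (Sigma.mk i)) i
        = if i ∈ L then J i else ∅ := sigFib_biUnion
    have hfilt : (Finset.univ.filter fun i =>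
        sigFib (L.biUnion fun i => (J i).image (Sigma.mk i)) i ∉ T i) = L := by
      ext i
      simp only [Finset.mem_filter, Finset.mem_univ, true_and, hfib]
      by_cases hi : i ∈ L
      · simp only [hi, if_true, iff_true]
        exact (hJ i hi).1
      · simp only [hi, if_false, iff_false, not_not]
        exact (hT i).1
    constructor
    · intro h
      exact hLK (hfilt ▸ mem_compFaces.mp h)
    · intro G hG
      rw [mem_compFaces]
      have hGsub : ∀ i, sigFib G i ⊆ sigFib (L.biUnion fun i => (J i).image (Sigma.mk i)) i :=
        sigFib_mono hG.1
      obtain ⟨s, hsF, hsG⟩ := Finset.exists_of_ssubset hG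
      obtain ⟨i0, x⟩ := s
      obtain ⟨hi0L, hxJ⟩ := mem_biUnion_image.mp hsF
      have hfilt' : (Finset.univ.filter fun i => sigFib G i ∉ T i) ⊂ L := by
        constructor
        · intro i hi
          have hi' : sigFib G i ∉ T i := (Finset.mem_filter.mp hi).2
          by_contra hiL
          have : sigFib G i ⊆ (∅ : Finset (Fin (l i))) := by
            have := hGsub i
            rwa [hfib i, if_neg hiL] at this
          exact hi' (Finset.subset_empty.mp this ▸ (hT i).1)
        · intro hsub
          have hi0 : i0 ∈ Finset.univ.filter fun i => sigFib G i ∉ T i := hsub hi0L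
          have hi0' : sigFib G i0 ∉ T i0 := (Finset.mem_filter.mp hi0).2
          apply hi0'
          have hss : sigFib G i0 ⊂ J i0 := by
            have h1 : sigFib G i0 ⊆ J i0 := by
              have := hGsub i0
              rwa [hfib i0, if_pos hi0L] at this
            refine ⟨h1, fun h2 => ?_⟩
            exact hsG (mem_sigFib.mp (h2 hxJ))
          exact (hJ i0 hi0L).2 _ hss
      exact hLmin _ hfilt'
end

section
/- Let K be a simplicial complex on [m] and let ψ : I → J be a fold of [m]. If L' is a simplicial complex on [m] such that L'_{∇(I,J)} ⊆ K_{∇(I,J)} (every face of the fold of L' is a face of the fold of K), then L' ⊆ L_ψ (every face of L' is a face of L_ψ). -/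
open scoped Classical

/-- `ψ` (already extended to all of `V` by the identity off `I`) is a fold of the
vertex set with disjoint source `I` and target `J`, surjective from `I` onto `J`. -/
def IsFold {V : Type*} (I J : Finset V) (ψ : V → V) : Prop :=
  Disjoint I J ∧ (∀ v ∈ I, ψ v ∈ J) ∧ (∀ v ∉ I, ψ v = v) ∧ ∀ w ∈ J, ∃ v ∈ I, ψ v = w

/-- The folded complex of `K` under the extended fold map `ψ`: its faces are exactly
the images `ψ(σ)` of faces `σ` of `K`. -/
def foldFaces {V : Type*} [DecidableEq V] (K : Set (Finset V)) (f : V → V) :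
    Set (Finset V) :=
  {τ | ∃ σ ∈ K, τ = σ.image f}

/-- The complex `L_ψ = K_{∇(I,J)}⟨Δ[{k_1} ⊔ I_{k_1}], …, Δ[{k_l} ⊔ I_{k_l}]⟩` on `[m]`:
substitution of the full simplices on the blocks `{t} ⊔ ψ⁻¹(t)` (for `t ∈ [m]∖I`)
into the folded complex `K_{∇(I,J)}`. Its faces are the unions `⊔_{t ∈ [m]∖I} σ t`
with `σ t ⊆ {t} ⊔ ψ⁻¹(t)` and `{t ∈ [m]∖I | σ t ≠ ∅}` a face of `K_{∇(I,J)}`. -/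
def LpsiFaces {m : ℕ} (K : Set (Finset (Fin m))) (I : Finset (Fin m))
    (ψ : Fin m → Fin m) : Set (Finset (Fin m)) :=
  {F | ∃ σ : Fin m → Finset (Fin m),
    (∀ t ∉ I, σ t ⊆ insert t (I.filter fun w => ψ w = t)) ∧
    F = (Finset.univ \ I).biUnion σ ∧
    ((Finset.univ \ I).filter fun t => (σ t).Nonempty) ∈ foldFaces K ψ}

/-- If `L'` is a simplicial complex on `[m]` whose fold `L'_{∇(I,J)}` is contained in
`K_{∇(I,J)}`, then `L' ⊆ L_ψ`. -/
theorem subcomplex_of_fold_subset {m : ℕ} (K L' : Set (Finset (Fin m)))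
    (hK : IsComplex K) (hL' : IsComplex L')
    (I J : Finset (Fin m)) (ψ : Fin m → Fin m) (hψ : IsFold I J ψ)
    (h : foldFaces L' ψ ⊆ foldFaces K ψ) :
    L' ⊆ LpsiFaces K I ψ := by
  intro F hF
  obtain ⟨hdisj, hIJ, hid, -⟩ := hψ
  refine ⟨fun t => F.filter (fun v => v = t ∨ (v ∈ I ∧ ψ v = t)), ?_, ?_, ?_⟩
  · intro t ht v hv
    simp only [Finset.mem_filter] at hv
    rcases hv.2 with rfl | ⟨hvI, hvt⟩
    · exact Finset.mem_insert_self _ _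
    · exact Finset.mem_insert_of_mem (Finset.mem_filter.mpr ⟨hvI, hvt⟩)
  · ext v
    simp only [Finset.mem_biUnion, Finset.mem_sdiff, Finset.mem_univ, true_and,
      Finset.mem_filter]
    constructor
    · intro hv
      by_cases hvI : v ∈ I
      · exact ⟨ψ v, Finset.disjoint_left.mp hdisj.symm (hIJ v hvI), hv, Or.inr ⟨hvI, rfl⟩⟩
      · exact ⟨v, hvI, hv, Or.inl rfl⟩
    · rintro ⟨t, ht, hv, -⟩
      exact hv
  · have key : ((Finset.univ \ I).filter fun t =>
        (F.filter (fun v => v = t ∨ (v ∈ I ∧ ψ v = t))).Nonempty) = F.image ψ := by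
      ext t
      constructor
      · intro ht
        obtain ⟨htI, v, hv⟩ := Finset.mem_filter.mp ht
        rw [Finset.mem_sdiff] at htI
        obtain ⟨hvF, hv2⟩ := Finset.mem_filter.mp hv
        rcases hv2 with rfl | ⟨hvI, hvt⟩
        · exact Finset.mem_image.mpr ⟨v, hvF, hid v htI.2⟩
        · exact Finset.mem_image.mpr ⟨v, hvF, hvt⟩
      · intro ht
        obtain ⟨v, hvF, rfl⟩ := Finset.mem_image.mp ht
        refine Finset.mem_filter.mpr ⟨Finset.mem_sdiff.mpr ⟨Finset.mem_univ _, ?_⟩, v, ?_⟩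
        · by_cases hvI : v ∈ I
          · exact Finset.disjoint_left.mp hdisj.symm (hIJ v hvI)
          · rw [hid v hvI]; exact hvI
        · by_cases hvI : v ∈ I
          · exact Finset.mem_filter.mpr ⟨hvF, Or.inr ⟨hvI, rfl⟩⟩
          · exact Finset.mem_filter.mpr ⟨hvF, Or.inl (hid v hvI).symm⟩
    rw [key]
    exact h ⟨F, hF, rfl⟩
end

section
/- Let K be a simplicial complex on [m] and let ψ : I → J be a fold of [m]. Then the complex L_ψ contains K (every face of K is a face of L_ψ), and L_ψ folds onto the fold of K, i.e. (L_ψ)_{∇(I,J)} = K_{∇(I,J)}. Consequently L_ψ is the largest simplicial complex on [m] whose fold under ψ is contained in K_{∇(I,J)}. -/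
open scoped Classical

/-- `L_ψ` contains `K`, the fold of `L_ψ` equals the fold of `K`, and `L_ψ` is the
largest simplicial complex on `[m]` whose fold under `ψ` is contained in
`K_{∇(I,J)}`. -/
theorem Lpsi_maximal {m : ℕ} (K : Set (Finset (Fin m))) (hK : IsComplex K)
    (I J : Finset (Fin m)) (ψ : Fin m → Fin m) (hψ : IsFold I J ψ) :
    K ⊆ LpsiFaces K I ψ ∧
      foldFaces (LpsiFaces K I ψ) ψ = foldFaces K ψ ∧
      ∀ L' : Set (Finset (Fin m)), IsComplex L' →
        foldFaces L' ψ ⊆ foldFaces K ψ → L' ⊆ LpsiFaces K I ψ := by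
  obtain ⟨hdisj, hIJ, hid, hsurj⟩ := hψ
  -- Key lemma: any `F` with `F.image ψ ∈ foldFaces K ψ` lies in `LpsiFaces K I ψ`.
  have key : ∀ F : Finset (Fin m), F.image ψ ∈ foldFaces K ψ → F ∈ LpsiFaces K I ψ := by
    intro F hF
    refine ⟨fun t => F ∩ insert t (I.filter fun w => ψ w = t),
      fun t _ => Finset.inter_subset_right, ?_, ?_⟩
    · ext v
      simp only [Finset.mem_biUnion, Finset.mem_sdiff, Finset.mem_univ, true_and,
        Finset.mem_inter, Finset.mem_insert, Finset.mem_filter]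
      constructor
      · intro hv
        by_cases hvI : v ∈ I
        · exact ⟨ψ v, Finset.disjoint_right.mp hdisj (hIJ v hvI), hv, Or.inr ⟨hvI, rfl⟩⟩
        · exact ⟨v, hvI, hv, Or.inl rfl⟩
      · rintro ⟨t, ht, hv, _⟩; exact hv
    · have heq : ((Finset.univ \ I).filter fun t =>
          (F ∩ insert t (I.filter fun w => ψ w = t)).Nonempty) = F.image ψ := by
        ext t
        simp only [Finset.mem_filter, Finset.mem_sdiff, Finset.mem_univ, true_and,
          Finset.mem_image, Finset.Nonempty, Finset.mem_inter, Finset.mem_insert]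
        constructor
        · rintro ⟨htI, v, hvF, hv⟩
          rcases hv with rfl | h
          · exact ⟨v, hvF, hid v htI⟩
          · exact ⟨v, hvF, h.2⟩
        · rintro ⟨v, hvF, rfl⟩
          by_cases hvI : v ∈ I
          · exact ⟨Finset.disjoint_right.mp hdisj (hIJ v hvI), v, hvF,
              Or.inr ⟨hvI, rfl⟩⟩
          · rw [hid v hvI]; exact ⟨hvI, v, hvF, Or.inl rfl⟩
      rw [heq]; exact hF
  refine ⟨fun τ hτ => key τ ⟨τ, hτ, rfl⟩, ?_, fun L' _ hsub F hF => key F (hsub ⟨F, hF, rfl⟩)⟩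
  ext τ
  constructor
  · rintro ⟨F, ⟨σ, hsub, rfl, hT⟩, rfl⟩
    have hval : ∀ t ∉ I, ∀ v ∈ σ t, ψ v = t := by
      intro t htI v hv
      rcases Finset.mem_insert.mp (hsub t htI hv) with h | h
      · rw [h]; exact hid t htI
      · exact (Finset.mem_filter.mp h).2
    obtain ⟨ρ, hρ, hTeq⟩ := hT
    refine ⟨ρ, hρ, ?_⟩
    rw [← hTeq]
    ext t
    simp only [Finset.mem_image, Finset.mem_biUnion, Finset.mem_sdiff, Finset.mem_univ,
      true_and, Finset.mem_filter]; simp only [Finset.Nonempty]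
    constructor
    · rintro ⟨v, ⟨s, hsI, hv⟩, rfl⟩
      have := hval s hsI v hv
      rw [this]
      exact ⟨hsI, v, hv⟩
    · rintro ⟨htI, v, hv⟩
      exact ⟨v, ⟨t, htI, hv⟩, hval t htI v hv⟩
  · rintro ⟨σ0, hσ0, rfl⟩
    exact ⟨σ0, key σ0 ⟨σ0, hσ0, rfl⟩, rfl⟩
end

section
/- Let k ≥ 2, let Π = {P_1,…,P_k} be a k-partition of [m], and let ψ : I → J be a fold of [m] with I = {u} ⊆ P_i and J = {v} ⊆ P_j for some i ≠ j. Then the folded identity complex is (K_Π)_{∇(u,v)} = ∂Δ[[m]∖{u}], the boundary of the simplex on [m]∖{u}; that is, the faces of (K_Π)_{∇(u,v)} are exactly the proper subsets of [m]∖{u}. -/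
open scoped Classical

/-- The identity complex `K_Π` of a `k`-partition `Π = {P 1, …, P k}` of `[m]`:
`σ ⊆ [m]` is a face if and only if at most `k - 2` of the parts `P i` satisfy
`P i ⊆ σ`. -/
def KPiFaces {m k : ℕ} (P : Fin k → Finset (Fin m)) : Set (Finset (Fin m)) :=
  {σ | (Finset.univ.filter fun i => P i ⊆ σ).card ≤ k - 2}

/-- If `I = {u} ⊆ P i` and `J = {v} ⊆ P j` with `i ≠ j`, then the folded identity
complex is `(K_Π)_{∇(u,v)} = ∂Δ[[m]∖{u}]`: its faces are exactly the proper subsets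
of `[m]∖{u}`. -/
theorem foldKPi_single_across_parts {m k : ℕ} (hk : 2 ≤ k)
    (P : Fin k → Finset (Fin m))
    (hne : ∀ i, (P i).Nonempty)
    (hdisj : ∀ i j, i ≠ j → Disjoint (P i) (P j))
    (hcov : Finset.univ.biUnion P = Finset.univ)
    (u v : Fin m) (i j : Fin k) (hij : i ≠ j) (hu : u ∈ P i) (hv : v ∈ P j)
    (F : Finset (Fin m)) :
    F ∈ foldFaces (KPiFaces P) (fun w => if w = u then v else w) ↔
      F ⊂ Finset.univ.erase u := by
  set f : Fin m → Fin m := fun w => if w = u then v else w with hf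
  have huv : v ≠ u := fun h => (Finset.disjoint_left.mp (hdisj i j hij) hu) (h ▸ hv)
  -- two distinct non-contained parts give the card bound
  have hcard2 : ∀ (i' j' : Fin k) (σ : Finset (Fin m)), i' ≠ j' → ¬ P i' ⊆ σ → ¬ P j' ⊆ σ →
      σ ∈ KPiFaces P := by
    intro i' j' σ hij' h1 h2
    have hsub : (Finset.univ.filter fun l => P l ⊆ σ) ⊆ ({i', j'} : Finset (Fin k))ᶜ := by
      intro l hl
      simp only [Finset.mem_filter] at hl
      simp only [Finset.mem_compl, Finset.mem_insert, Finset.mem_singleton]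
      rintro (rfl | rfl) <;> tauto
    have hcc : (({i', j'} : Finset (Fin k))ᶜ).card = k - 2 := by
      rw [Finset.card_compl, Finset.card_insert_of_notMem (by simpa using hij'),
        Finset.card_singleton]
      simp
    exact le_trans (Finset.card_le_card hsub) (le_of_eq hcc)
  have himg : ∀ (s : Finset (Fin m)), u ∉ s → s.image f = s := by
    intro s hs
    have : s.image f = s.image id :=
      Finset.image_congr (fun w hw => if_neg (fun (h : w = u) => hs (h ▸ hw)))
    rw [this, Finset.image_id]
  constructor
  · rintro ⟨σ, hσ, rfl⟩
    rw [Finset.ssubset_iff_subset_ne]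
    constructor
    · intro w hw
      obtain ⟨t, ht, hft⟩ := Finset.mem_image.mp hw
      refine Finset.mem_erase.mpr ⟨?_, Finset.mem_univ w⟩
      subst hft
      by_cases htu : t = u
      · simpa [hf, htu] using huv
      · simpa [hf, htu] using htu
    · intro heq
      have hmem : ∀ w : Fin m, w ≠ u → w ≠ v → w ∈ σ := by
        intro w hwu hwv
        have hwF : w ∈ σ.image f := heq ▸ Finset.mem_erase.mpr ⟨hwu, Finset.mem_univ w⟩
        obtain ⟨t, ht, hft⟩ := Finset.mem_image.mp hwF
        by_cases htu : t = u
        · exfalso; apply hwv; simp [hf, htu] at hft; exact hft.symm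
        · simp only [hf, if_neg htu] at hft; exact hft ▸ ht
      have hor : u ∈ σ ∨ v ∈ σ := by
        have hvF : v ∈ σ.image f := heq ▸ Finset.mem_erase.mpr ⟨huv, Finset.mem_univ v⟩
        obtain ⟨t, ht, hft⟩ := Finset.mem_image.mp hvF
        by_cases htu : t = u
        · exact Or.inl (htu ▸ ht)
        · simp only [hf, if_neg htu] at hft; exact Or.inr (hft ▸ ht)
      have hbig : k - 1 ≤ (Finset.univ.filter fun l => P l ⊆ σ).card := by
        rcases hor with hus | hvs
        · have : Finset.univ.erase j ⊆ (Finset.univ.filter fun l => P l ⊆ σ) := by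
            intro l hl
            have hlj : l ≠ j := (Finset.mem_erase.mp hl).1
            refine Finset.mem_filter.mpr ⟨Finset.mem_univ l, fun w hw => ?_⟩
            by_cases hwu : w = u
            · exact hwu ▸ hus
            · refine hmem w hwu (fun hwv => ?_)
              exact (Finset.disjoint_left.mp (hdisj l j hlj) hw) (hwv ▸ hv)
          calc k - 1 = (Finset.univ.erase j).card := by
                rw [Finset.card_erase_of_mem (Finset.mem_univ j)]; simp
            _ ≤ _ := Finset.card_le_card this
        · have : Finset.univ.erase i ⊆ (Finset.univ.filter fun l => P l ⊆ σ) := by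
            intro l hl
            have hli : l ≠ i := (Finset.mem_erase.mp hl).1
            refine Finset.mem_filter.mpr ⟨Finset.mem_univ l, fun w hw => ?_⟩
            by_cases hwv : w = v
            · exact hwv ▸ hvs
            · refine hmem w (fun hwu => ?_) hwv
              exact (Finset.disjoint_left.mp (hdisj l i hli) hw) (hwu ▸ hu)
          calc k - 1 = (Finset.univ.erase i).card := by
                rw [Finset.card_erase_of_mem (Finset.mem_univ i)]; simp
            _ ≤ _ := Finset.card_le_card this
      have hsmall : (Finset.univ.filter fun l => P l ⊆ σ).card ≤ k - 2 := hσ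
      omega
  · intro hF
    obtain ⟨x, hx, hxF⟩ := Finset.exists_of_ssubset hF
    have hxu : x ≠ u := (Finset.mem_erase.mp hx).1
    have hFu : u ∉ F := fun h => (Finset.mem_erase.mp (hF.subset h)).1 rfl
    obtain ⟨l, _, hxl⟩ := Finset.mem_biUnion.mp (hcov ▸ Finset.mem_univ x)
    by_cases hli : l = i
    · subst hli
      by_cases hvF : v ∈ F
      · refine ⟨insert u (F.erase v), ?_, ?_⟩
        · refine hcard2 l j _ hij ?_ ?_
          · intro h
            have := h hxl
            rcases Finset.mem_insert.mp this with h1 | h2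
            · exact hxu h1
            · exact hxF (Finset.mem_of_mem_erase h2)
          · intro h
            have := h hv
            rcases Finset.mem_insert.mp this with h1 | h2
            · exact huv h1
            · exact (Finset.notMem_erase v F) h2
        · rw [Finset.image_insert, himg (F.erase v)
            (fun h => hFu (Finset.mem_of_mem_erase h))]
          simp only [hf, if_pos rfl]
          rw [Finset.insert_erase hvF]
      · refine ⟨F, hcard2 l j F hij (fun h => hxF (h hxl)) (fun h => hvF (h hv)), (himg F hFu).symm⟩
    · refine ⟨F, hcard2 i l F (fun h => hli h.symm) (fun h => hFu (h hu)) (fun h => hxF (h hxl)), (himg F hFu).symm⟩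
end

section
/- Let k ≥ 2, let Π = {P_1,…,P_k} be a k-partition of [m], and let ψ : I → J be a fold of [m] such that |I| ≥ 2 and there is no l ∈ [k] with I ∪ J ⊆ P_l. Then the folded identity complex is the full simplex on the remaining vertices: (K_Π)_{∇(I,J)} = Δ[[m]∖I], i.e. every subset of [m]∖I is a face of (K_Π)_{∇(I,J)}. -/
open scoped Classical

lemma mem_KPi_of_two {m k : ℕ} (P : Fin k → Finset (Fin m)) {σ : Finset (Fin m)}
    {i j : Fin k} (hij : i ≠ j) (hi : ¬ P i ⊆ σ) (hj : ¬ P j ⊆ σ) :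
    σ ∈ KPiFaces P := by
  have hsub : (Finset.univ.filter fun l => P l ⊆ σ) ⊆ (Finset.univ.erase i).erase j := by
    intro l hl
    simp only [Finset.mem_filter] at hl
    simp only [Finset.mem_erase, Finset.mem_univ, and_true]
    refine ⟨?_, ?_⟩
    · rintro rfl; exact hj hl.2
    · rintro rfl; exact hi hl.2
  have hjm : j ∈ Finset.univ.erase i := by
    simp [Finset.mem_erase, hij.symm]
  have hcard : ((Finset.univ.erase i).erase j).card = k - 2 := by
    rw [Finset.card_erase_of_mem hjm, Finset.card_erase_of_mem (Finset.mem_univ i)]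
    simp [Finset.card_univ]; omega
  calc (Finset.univ.filter fun l => P l ⊆ σ).card
      ≤ ((Finset.univ.erase i).erase j).card := Finset.card_le_card hsub
    _ = k - 2 := hcard

/-- If `|I| ≥ 2` and there is no part `P l` with `I ∪ J ⊆ P l`, then the folded
identity complex is the full simplex on the remaining vertices:
`(K_Π)_{∇(I,J)} = Δ[[m]∖I]`, i.e. every subset of `[m]∖I` is a face. -/
theorem foldKPi_full_simplex {m k : ℕ} (hk : 2 ≤ k) (P : Fin k → Finset (Fin m))
    (hne : ∀ i, (P i).Nonempty)
    (hdisj : ∀ i j, i ≠ j → Disjoint (P i) (P j))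
    (hcov : Finset.univ.biUnion P = Finset.univ)
    (I J : Finset (Fin m)) (ψ : Fin m → Fin m) (hψ : IsFold I J ψ)
    (hI : 2 ≤ I.card) (hnl : ¬∃ l : Fin k, I ∪ J ⊆ P l)
    (F : Finset (Fin m)) :
    F ∈ foldFaces (KPiFaces P) ψ ↔ F ⊆ Finset.univ \ I := by
  obtain ⟨hIJ, hψJ, hψid, hψsurj⟩ := hψ
  constructor
  · rintro ⟨σ, hσ, rfl⟩
    intro x hx
    simp only [Finset.mem_image] at hx
    obtain ⟨v, hv, rfl⟩ := hx
    simp only [Finset.mem_sdiff, Finset.mem_univ, true_and]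
    by_cases hvI : v ∈ I
    · exact fun h => (Finset.disjoint_left.mp hIJ) h (hψJ v hvI)
    · rw [hψid v hvI]; exact hvI
  · intro hF
    have hFI : ∀ x ∈ F, x ∉ I := fun x hx => (Finset.mem_sdiff.mp (hF hx)).2
    have himF : F.image ψ = F := by
      rw [Finset.image_congr (g := id) (fun x hx => hψid x (hFI x hx)), Finset.image_id]
    -- pick a ∈ I and its part
    have hIne : I.Nonempty := Finset.card_pos.mp (by omega)
    obtain ⟨a, haI⟩ := hIne
    have ha' : a ∈ Finset.univ.biUnion P := by rw [hcov]; exact Finset.mem_univ a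
    obtain ⟨l, -, hal⟩ := Finset.mem_biUnion.mp ha'
    have haF : a ∉ F := fun h => hFI a h haI
    by_cases hIl : I ⊆ P l
    · -- I ⊆ P l; get w ∈ J \ P l
      have hnl' : ¬ I ∪ J ⊆ P l := fun h => hnl ⟨l, h⟩
      obtain ⟨w, hwIJ, hwl⟩ := Finset.not_subset.mp hnl'
      have hwJ : w ∈ J := by
        rcases Finset.mem_union.mp hwIJ with h | h
        · exact absurd (hIl h) hwl
        · exact h
      have hw' : w ∈ Finset.univ.biUnion P := by rw [hcov]; exact Finset.mem_univ w
      obtain ⟨j, -, hwj⟩ := Finset.mem_biUnion.mp hw'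
      have hjl : j ≠ l := fun h => hwl (h ▸ hwj)
      by_cases hwF : w ∈ F
      · -- replace w by a preimage v ∈ I
        obtain ⟨v, hvI, hvw⟩ := hψsurj w hwJ
        obtain ⟨u, huI, huv⟩ := Finset.exists_mem_ne (lt_of_lt_of_le one_lt_two hI) v
        refine ⟨insert v (F.erase w), ?_, ?_⟩
        · have hwσ : w ∉ insert v (F.erase w) := by
            simp only [Finset.mem_insert, Finset.mem_erase]
            push_neg
            refine ⟨fun h => ?_, fun h _ => (h rfl).elim⟩
            exact (Finset.disjoint_left.mp hIJ) (h ▸ hvI) hwJ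
          have huσ : u ∉ insert v (F.erase w) := by
            simp only [Finset.mem_insert, Finset.mem_erase]
            push_neg
            exact ⟨huv, fun _ h => hFI u h huI⟩
          exact mem_KPi_of_two P hjl (fun h => hwσ (h hwj)) (fun h => huσ (h (hIl huI)))
        · rw [Finset.image_insert, hvw]
          have : (F.erase w).image ψ = F.erase w := by
            rw [Finset.image_congr (g := id)
              (fun x hx => hψid x (hFI x (Finset.mem_of_mem_erase hx))), Finset.image_id]
          rw [this, Finset.insert_erase hwF]
      · -- σ = F works
        refine ⟨F, mem_KPi_of_two P hjl (fun h => hwF (h hwj))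
          (fun h => haF (h (hIl haI))), himF.symm⟩
    · -- I meets a second part
      obtain ⟨b, hbI, hbl⟩ := Finset.not_subset.mp hIl
      have hb' : b ∈ Finset.univ.biUnion P := by rw [hcov]; exact Finset.mem_univ b
      obtain ⟨j, -, hbj⟩ := Finset.mem_biUnion.mp hb'
      have hjl : j ≠ l := fun h => hbl (h ▸ hbj)
      have hbF : b ∉ F := fun h => hFI b h hbI
      exact ⟨F, mem_KPi_of_two P hjl (fun h => hbF (h hbj))
        (fun h => haF (h hal)), himF.symm⟩
end

section
/- Let k ≥ 2, let Π = {P_1,…,P_k} be a k-partition of [m], let ψ : I → J be a fold of [m] with I = {u} ⊆ P_i and J = {v} ⊆ P_j for some i ≠ j, and let L_ψ denote the complex L_ψ associated to K_Π and ψ. Then the minimal missing faces of L_ψ are exactly [m]∖{u} and [m]∖{v}. -/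
open scoped Classical

section Aux

variable {m : ℕ} {u v : Fin m}

private lemma psi_apply_u : (if u = u then v else u) = v := if_pos rfl

private lemma psi_apply_ne {x : Fin m} (hx : x ≠ u) : (if x = u then v else x) = x :=
  if_neg hx

private lemma psi_ne_u (huv : u ≠ v) (w : Fin m) :
    (if w = u then v else w) ≠ u := by
  split_ifs with h
  · exact huv.symm
  · exact h

/-- Membership in the image of `ψ`. -/
private lemma mem_image_psi (huv : u ≠ v) (F : Finset (Fin m)) (t : Fin m) :
    t ∈ F.image (fun w => if w = u then v else w) ↔
      (t ≠ u ∧ t ≠ v ∧ t ∈ F) ∨ (t = v ∧ (u ∈ F ∨ v ∈ F)) := by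
  simp only [Finset.mem_image]
  constructor
  · rintro ⟨x, hx, rfl⟩
    by_cases hxu : x = u
    · subst hxu
      simp only [psi_apply_u]
      exact Or.inr ⟨rfl, Or.inl hx⟩
    · rw [psi_apply_ne hxu]
      by_cases hxv : x = v
      · subst hxv
        exact Or.inr ⟨rfl, Or.inr hx⟩
      · exact Or.inl ⟨hxu, hxv, hx⟩
  · rintro (⟨htu, htv, ht⟩ | ⟨heq, hF | hF⟩)
    · exact ⟨t, ht, psi_apply_ne htu⟩
    · exact ⟨u, hF, psi_apply_u.trans heq.symm⟩
    · exact ⟨v, hF, (psi_apply_ne huv.symm).trans heq.symm⟩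

private lemma image_psi_univ_erase_u (huv : u ≠ v) :
    (Finset.univ.erase u).image (fun w => if w = u then v else w) =
      Finset.univ.erase u := by
  ext t
  rw [mem_image_psi huv]
  simp only [Finset.mem_erase, Finset.mem_univ, and_true]
  constructor
  · rintro (⟨htu, _, _⟩ | ⟨rfl, _⟩)
    · exact htu
    · exact huv.symm
  · intro htu
    by_cases htv : t = v
    · exact Or.inr ⟨htv, Or.inr (by simp [huv.symm])⟩
    · exact Or.inl ⟨htu, htv, htu⟩

private lemma image_psi_univ_erase_v (huv : u ≠ v) :
    (Finset.univ.erase v).image (fun w => if w = u then v else w) =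
      Finset.univ.erase u := by
  ext t
  rw [mem_image_psi huv]
  simp only [Finset.mem_erase, Finset.mem_univ, and_true]
  constructor
  · rintro (⟨htu, _, _⟩ | ⟨rfl, _⟩)
    · exact htu
    · exact huv.symm
  · intro htu
    by_cases htv : t = v
    · exact Or.inr ⟨htv, Or.inl (by simp [huv])⟩
    · exact Or.inl ⟨htu, htv, by simp [htv]⟩

private lemma image_psi_univ (huv : u ≠ v) :
    (Finset.univ : Finset (Fin m)).image (fun w => if w = u then v else w) =
      Finset.univ.erase u := by
  ext t
  rw [mem_image_psi huv]
  simp only [Finset.mem_erase, Finset.mem_univ, and_true, or_true, and_true, true_and]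
  constructor
  · rintro (⟨htu, _⟩ | rfl)
    · exact htu
    · exact huv.symm
  · intro htu
    by_cases htv : t = v
    · exact Or.inr htv
    · exact Or.inl ⟨htu, htv⟩

/-- Key structural lemma: `F` is a face of `L_ψ` iff `ψ(F)` is a face of the folded
complex, i.e. iff some `τ ∈ K` has the same `ψ`-image as `F`. -/
private lemma lpsi_mem_iff (huv : u ≠ v) (K : Set (Finset (Fin m))) (F : Finset (Fin m)) :
    F ∈ LpsiFaces K {u} (fun w => if w = u then v else w) ↔
      ∃ τ ∈ K, τ.image (fun w => if w = u then v else w)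
        = F.image (fun w => if w = u then v else w) := by
  constructor
  · rintro ⟨σ, h1, hF, hT⟩
    obtain ⟨τ, hτK, hτ⟩ := hT
    refine ⟨τ, hτK, ?_⟩
    rw [← hτ]
    -- It suffices to show the image of F equals the "support" set.
    have fact2 : ∀ t, t ≠ u → ∀ x ∈ σ t, x ∈ F ∧ (x = t ∨ (x = u ∧ t = v)) := by
      intro t ht x hx
      have hxF : x ∈ F := by
        rw [hF]
        exact Finset.mem_biUnion.mpr ⟨t, by simp [ht], hx⟩
      have := h1 t (by simp [ht]) hx
      simp only [Finset.mem_insert, Finset.mem_filter, Finset.mem_singleton] at this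
      rcases this with h | ⟨rfl, h⟩
      · exact ⟨hxF, Or.inl h⟩
      · rw [psi_apply_u] at h
        exact ⟨hxF, Or.inr ⟨rfl, h.symm⟩⟩
    have fact1 : ∀ x ∈ F, (x ≠ u ∧ x ∈ σ x) ∨ (x = u ∧ u ∈ σ v) := by
      intro x hx
      rw [hF] at hx
      obtain ⟨t, ht, hxt⟩ := Finset.mem_biUnion.mp hx
      simp only [Finset.mem_sdiff, Finset.mem_univ, Finset.mem_singleton, true_and] at ht
      rcases (fact2 t ht x hxt).2 with h | ⟨hxu, htv⟩
      · rw [← h] at ht hxt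
        exact Or.inl ⟨ht, hxt⟩
      · rw [htv] at hxt
        exact Or.inr ⟨hxu, hxu ▸ hxt⟩
    ext t
    simp only [Finset.mem_filter, Finset.mem_sdiff, Finset.mem_univ, Finset.mem_singleton,
      true_and, Finset.mem_image]
    constructor
    · rintro ⟨ht, hne⟩
      obtain ⟨x, hx⟩ := hne
      rcases (fact2 t ht x hx).2 with hxt | ⟨hxu, htv⟩
      · exact ⟨x, (fact2 t ht x hx).1, by rw [hxt, psi_apply_ne ht]⟩
      · exact ⟨x, (fact2 t ht x hx).1, by rw [hxu, psi_apply_u, htv]⟩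
    · rintro ⟨x, hx, rfl⟩
      rcases fact1 x hx with ⟨hxu, hxσ⟩ | ⟨hxu, huσ⟩
      · rw [psi_apply_ne hxu]
        exact ⟨hxu, ⟨x, hxσ⟩⟩
      · rw [hxu, psi_apply_u]
        exact ⟨huv.symm, ⟨u, huσ⟩⟩
  · rintro ⟨τ, hτK, heq⟩
    refine ⟨fun t => F ∩ insert t (({u} : Finset (Fin m)).filter
      fun w => (if w = u then v else w) = t), fun t _ => Finset.inter_subset_right, ?_, ?_⟩
    · ext x
      simp only [Finset.mem_biUnion, Finset.mem_sdiff, Finset.mem_univ, Finset.mem_singleton,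
        true_and, Finset.mem_inter, Finset.mem_insert, Finset.mem_filter]
      constructor
      · intro hx
        by_cases hxu : x = u
        · refine ⟨v, huv.symm, hx, Or.inr ⟨hxu, ?_⟩⟩
          rw [hxu]
          simp
        · exact ⟨x, hxu, hx, Or.inl rfl⟩
      · rintro ⟨t, _, hx, _⟩
        exact hx
    · refine ⟨τ, hτK, ?_⟩
      rw [heq]
      ext t
      simp only [Finset.mem_filter, Finset.mem_sdiff, Finset.mem_univ, Finset.mem_singleton,
        true_and, Finset.mem_image]
      constructor
      · rintro ⟨ht, hne⟩
        obtain ⟨x, hx⟩ := hne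
        simp only [Finset.mem_inter, Finset.mem_insert, Finset.mem_filter,
          Finset.mem_singleton] at hx
        rcases hx.2 with hxt | ⟨hxu, hvt⟩
        · exact ⟨x, hx.1, by rw [hxt, psi_apply_ne ht]⟩
        · exact ⟨x, hx.1, hvt⟩
      · rintro ⟨x, hx, rfl⟩
        by_cases hxu : x = u
        · refine ⟨psi_ne_u huv x, ⟨u, ?_⟩⟩
          have huF : u ∈ F := hxu ▸ hx
          rw [hxu]
          simp [huF]
        · rw [psi_apply_ne hxu]
          refine ⟨hxu, ⟨x, ?_⟩⟩
          simp [hx]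

end Aux

section Parts

variable {m k : ℕ} {u v : Fin m} {i j : Fin k}

/-- No face of `K_Π` maps onto `[m] ∖ {u}` under `ψ`. -/
private lemma no_tau (hk : 2 ≤ k) (P : Fin k → Finset (Fin m))
    (hdisj : ∀ i j, i ≠ j → Disjoint (P i) (P j)) (hij : i ≠ j)
    (hu : u ∈ P i) (hv : v ∈ P j) (huv : u ≠ v) :
    ¬ ∃ τ ∈ KPiFaces P, τ.image (fun w => if w = u then v else w)
        = Finset.univ.erase u := by
  rintro ⟨τ, hτK, hτ⟩
  have hsub : ∀ x : Fin m, x ≠ u → x ≠ v → x ∈ τ := by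
    intro x hxu hxv
    have hx : x ∈ τ.image (fun w => if w = u then v else w) := by
      rw [hτ]; simp [hxu]
    rw [mem_image_psi huv] at hx
    rcases hx with ⟨_, _, h⟩ | ⟨h, _⟩
    · exact h
    · exact absurd h hxv
  have hv' : u ∈ τ ∨ v ∈ τ := by
    have hx : v ∈ τ.image (fun w => if w = u then v else w) := by
      rw [hτ]; simp [huv.symm]
    rw [mem_image_psi huv] at hx
    rcases hx with ⟨_, h, _⟩ | ⟨_, h⟩
    · exact absurd rfl h
    · exact h
  have key : ∃ i0 : Fin k, Finset.univ.erase i0 ⊆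
      Finset.univ.filter (fun l => P l ⊆ τ) := by
    rcases hv' with h | h
    · refine ⟨j, fun l hl => ?_⟩
      simp only [Finset.mem_erase, Finset.mem_univ, and_true] at hl
      simp only [Finset.mem_filter, Finset.mem_univ, true_and]
      intro x hx
      by_cases hxu : x = u
      · subst hxu; exact h
      · refine hsub x hxu (fun hxv => ?_)
        subst hxv
        exact Finset.disjoint_left.mp (hdisj l j hl) hx hv
    · refine ⟨i, fun l hl => ?_⟩
      simp only [Finset.mem_erase, Finset.mem_univ, and_true] at hl
      simp only [Finset.mem_filter, Finset.mem_univ, true_and]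
      intro x hx
      by_cases hxv : x = v
      · subst hxv; exact h
      · refine hsub x (fun hxu => ?_) hxv
        subst hxu
        exact Finset.disjoint_left.mp (hdisj l i hl) hx hu
  obtain ⟨i0, hi0⟩ := key
  have hcard := Finset.card_le_card hi0
  rw [Finset.card_erase_of_mem (Finset.mem_univ i0), Finset.card_univ, Fintype.card_fin] at hcard
  have hK : (Finset.univ.filter (fun l => P l ⊆ τ)).card ≤ k - 2 := hτK
  omega

/-- Any subset other than `[m]`, `[m]∖{u}`, `[m]∖{v}` has the same `ψ`-image as
some face of `K_Π`. -/
private lemma yes_tau (P : Fin k → Finset (Fin m))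
    (hdisj : ∀ i' j', i' ≠ j' → Disjoint (P i') (P j')) (hij : i ≠ j)
    (hu : u ∈ P i) (hv : v ∈ P j) (huv : u ≠ v)
    (hcov : Finset.univ.biUnion P = Finset.univ)
    (F : Finset (Fin m)) (h1 : F ≠ Finset.univ.erase u)
    (h2 : F ≠ Finset.univ.erase v) (h3 : F ≠ Finset.univ) :
    ∃ τ ∈ KPiFaces P, τ.image (fun w => if w = u then v else w)
      = F.image (fun w => if w = u then v else w) := by
  have two_missing : ∀ (τ : Finset (Fin m)) (a b : Fin m) (ia ib : Fin k),
      ia ≠ ib → a ∈ P ia → b ∈ P ib → a ∉ τ → b ∉ τ → τ ∈ KPiFaces P := by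
    intro τ a b ia ib hab ha hb haτ hbτ
    have hsub : Finset.univ.filter (fun l => P l ⊆ τ) ⊆ (Finset.univ.erase ia).erase ib := by
      intro l hl
      simp only [Finset.mem_filter, Finset.mem_univ, true_and] at hl
      simp only [Finset.mem_erase, Finset.mem_univ, and_true]
      constructor
      · rintro rfl; exact hbτ (hl hb)
      · rintro rfl; exact haτ (hl ha)
    have hcard := Finset.card_le_card hsub
    have h1 : ((Finset.univ.erase ia).erase ib).card ≤ k - 2 := by
      rw [Finset.card_erase_of_mem
          (Finset.mem_erase.mpr ⟨fun h => hab h.symm, Finset.mem_univ ib⟩), Finset.card_erase_of_mem (Finset.mem_univ ia),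
        Finset.card_univ, Fintype.card_fin]
      omega
    exact le_trans hcard h1
  by_cases hcase : u ∉ F ∧ v ∉ F
  · exact ⟨F, two_missing F u v i j hij hu hv hcase.1 hcase.2, rfl⟩
  · -- u ∈ F or v ∈ F; find x ∉ F with x ≠ u, x ≠ v
    have hx : ∃ x, x ∉ F ∧ x ≠ u ∧ x ≠ v := by
      by_contra hcon
      push_neg at hcon
      have hall : ∀ x : Fin m, x ≠ u → x ≠ v → x ∈ F := by
        intro x hxu hxv
        by_contra hxF
        exact hxv (hcon x hxF hxu)
      rcases not_and_or.mp hcase with hF | hF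
      all_goals push_neg at hF
      · by_cases hvF : v ∈ F
        · refine h3 (Finset.eq_univ_of_forall fun x => ?_)
          by_cases hxu : x = u
          · subst hxu; exact hF
          · by_cases hxv : x = v
            · subst hxv; exact hvF
            · exact hall x hxu hxv
        · refine h2 (Finset.ext fun x => ?_)
          simp only [Finset.mem_erase, Finset.mem_univ, and_true]
          constructor
          · intro hxF; rintro rfl; exact hvF hxF
          · intro hxv
            by_cases hxu : x = u
            · subst hxu; exact hF
            · exact hall x hxu hxv
      · by_cases huF : u ∈ F
        · refine h3 (Finset.eq_univ_of_forall fun x => ?_)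
          by_cases hxu : x = u
          · subst hxu; exact huF
          · by_cases hxv : x = v
            · subst hxv; exact hF
            · exact hall x hxu hxv
        · refine h1 (Finset.ext fun x => ?_)
          simp only [Finset.mem_erase, Finset.mem_univ, and_true]
          constructor
          · intro hxF; rintro rfl; exact huF hxF
          · intro hxu
            by_cases hxv : x = v
            · subst hxv; exact hF
            · exact hall x hxu hxv
    obtain ⟨x, hxF, hxu, hxv⟩ := hx
    have hxl : ∃ l, x ∈ P l := by
      have : x ∈ Finset.univ.biUnion P := hcov ▸ Finset.mem_univ x
      obtain ⟨l, _, hl⟩ := Finset.mem_biUnion.mp this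
      exact ⟨l, hl⟩
    obtain ⟨l, hxl⟩ := hxl
    have huvF : u ∈ F ∨ v ∈ F := by
      rcases not_and_or.mp hcase with h | h
      · exact Or.inl (not_not.mp h)
      · exact Or.inr (not_not.mp h)
    have hxT : x ∉ F.image (fun w => if w = u then v else w) := by
      rw [mem_image_psi huv]
      rintro (⟨_, _, h⟩ | ⟨h, _⟩)
      · exact hxF h
      · exact hxv h
    have huT : u ∉ F.image (fun w => if w = u then v else w) := by
      rw [mem_image_psi huv]
      rintro (⟨h, _, _⟩ | ⟨h, _⟩)
      · exact h rfl
      · exact huv h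
    have hvT : v ∈ F.image (fun w => if w = u then v else w) := by
      rw [mem_image_psi huv]
      exact Or.inr ⟨rfl, huvF⟩
    have himfix : ∀ (S : Finset (Fin m)), u ∉ S →
        S.image (fun w => if w = u then v else w) = S := by
      intro S hS
      ext t
      rw [mem_image_psi huv]
      constructor
      · rintro (⟨_, _, h⟩ | ⟨rfl, h | h⟩)
        · exact h
        · exact absurd h hS
        · exact h
      · intro ht
        by_cases htv : t = v
        · subst htv; exact Or.inr ⟨rfl, Or.inr ht⟩
        · refine Or.inl ⟨fun htu => ?_, htv, ht⟩
          subst htu; exact hS ht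
    by_cases hli : l = i
    · subst hli
      refine ⟨insert u ((F.image (fun w => if w = u then v else w)).erase v), ?_, ?_⟩
      · refine two_missing _ v x j l hij.symm hv hxl ?_ ?_
        · simp only [Finset.mem_insert, Finset.mem_erase]
          rintro (h | ⟨h, _⟩)
          · exact huv h.symm
          · exact h rfl
        · simp only [Finset.mem_insert, Finset.mem_erase]
          rintro (h | ⟨_, h⟩)
          · exact hxu h
          · exact hxT h
      · rw [Finset.image_insert, show (if u = u then v else u) = v from if_pos rfl,
          himfix _ (fun h => huT (Finset.mem_of_mem_erase h)), Finset.insert_erase hvT]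
    · refine ⟨F.image (fun w => if w = u then v else w), ?_, ?_⟩
      · exact two_missing _ u x i l (fun h => hli h.symm) hu hxl huT hxT
      · exact himfix _ huT

end Parts

/-- If `I = {u} ⊆ P i` and `J = {v} ⊆ P j` with `i ≠ j`, then the minimal missing
faces of the complex `L_ψ` associated to `K_Π` and `ψ` are exactly `[m]∖{u}` and
`[m]∖{v}`. -/
theorem Lpsi_KPi_single_across_parts {m k : ℕ} (hk : 2 ≤ k)
    (P : Fin k → Finset (Fin m))
    (hne : ∀ i, (P i).Nonempty)
    (hdisj : ∀ i j, i ≠ j → Disjoint (P i) (P j))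
    (hcov : Finset.univ.biUnion P = Finset.univ)
    (u v : Fin m) (i j : Fin k) (hij : i ≠ j) (hu : u ∈ P i) (hv : v ∈ P j)
    (F : Finset (Fin m)) :
    MinNonFace (LpsiFaces (KPiFaces P) {u} (fun w => if w = u then v else w)) F ↔
      (F = Finset.univ.erase u ∨ F = Finset.univ.erase v) := by
  have huv : u ≠ v := by
    rintro rfl
    exact Finset.disjoint_left.mp (hdisj i j hij) hu hv
  have hface : ∀ G : Finset (Fin m),
      G ∈ LpsiFaces (KPiFaces P) {u} (fun w => if w = u then v else w) ↔
        (G ≠ Finset.univ.erase u ∧ G ≠ Finset.univ.erase v ∧ G ≠ Finset.univ) := by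
    intro G
    rw [lpsi_mem_iff huv]
    constructor
    · rintro ⟨τ, hτK, hτ⟩
      refine ⟨?_, ?_, ?_⟩
      · rintro rfl
        rw [image_psi_univ_erase_u huv] at hτ
        exact no_tau hk P hdisj hij hu hv huv ⟨τ, hτK, hτ⟩
      · rintro rfl
        rw [image_psi_univ_erase_v huv] at hτ
        exact no_tau hk P hdisj hij hu hv huv ⟨τ, hτK, hτ⟩
      · rintro rfl
        rw [image_psi_univ huv] at hτ
        exact no_tau hk P hdisj hij hu hv huv ⟨τ, hτK, hτ⟩
    · rintro ⟨h1, h2, h3⟩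
      exact yes_tau P hdisj hij hu hv huv hcov G h1 h2 h3
  constructor
  · rintro ⟨hnot, hmin⟩
    rw [hface] at hnot
    push_neg at hnot
    by_cases h1 : F = Finset.univ.erase u
    · exact Or.inl h1
    by_cases h2 : F = Finset.univ.erase v
    · exact Or.inr h2
    · exfalso
      have h3 := hnot h1 h2
      subst h3
      have h4 := hmin (Finset.univ.erase u) (Finset.erase_ssubset (Finset.mem_univ u))
      exact ((hface _).mp h4).1 rfl
  · rintro (rfl | rfl)
    · constructor
      · intro h
        exact ((hface _).mp h).1 rfl
      · intro τ hτ
        rw [hface]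
        have hτu : τ ⊆ Finset.univ.erase u := hτ.subset
        refine ⟨hτ.ne, ?_, ?_⟩
        · rintro rfl
          have : u ∈ Finset.univ.erase v := Finset.mem_erase.mpr ⟨huv, Finset.mem_univ u⟩
          exact (Finset.mem_erase.mp (hτu this)).1 rfl
        · rintro rfl
          exact (Finset.mem_erase.mp (hτu (Finset.mem_univ u))).1 rfl
    · constructor
      · intro h
        exact ((hface _).mp h).2.1 rfl
      · intro τ hτ
        rw [hface]
        have hτv : τ ⊆ Finset.univ.erase v := hτ.subset
        refine ⟨?_, hτ.ne, ?_⟩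
        · rintro rfl
          have : v ∈ Finset.univ.erase u := Finset.mem_erase.mpr ⟨huv.symm, Finset.mem_univ v⟩
          exact (Finset.mem_erase.mp (hτv this)).1 rfl
        · rintro rfl
          exact (Finset.mem_erase.mp (hτv (Finset.mem_univ v))).1 rfl
end

section
/- Let k ≥ 2, let Π = {P_1,…,P_k} be a k-partition of [m], let ψ : I → J be a fold of [m] such that |I| ≥ 2 and there is no l ∈ [k] with I ∪ J ⊆ P_l, and let L_ψ denote the complex L_ψ associated to K_Π and ψ. Then L_ψ = Δ[[m]], the full simplex on [m]: every subset of [m] is a face of L_ψ. -/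
open scoped Classical

lemma kpi_mem_of_two {m k : ℕ} (P : Fin k → Finset (Fin m)) {s : Finset (Fin m)} {i j : Fin k}
    (hij : i ≠ j) (hi : ¬ P i ⊆ s) (hj : ¬ P j ⊆ s) : s ∈ KPiFaces P := by
  classical
  unfold KPiFaces
  have hsub : (Finset.univ.filter fun i => P i ⊆ s) ⊆ Finset.univ \ {i, j} := by
    intro x hx
    simp only [Finset.mem_filter] at hx
    simp only [Finset.mem_sdiff, Finset.mem_univ, true_and, Finset.mem_insert,
      Finset.mem_singleton]
    rintro (rfl | rfl)
    · exact hi hx.2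
    · exact hj hx.2
  calc (Finset.univ.filter fun i => P i ⊆ s).card
      ≤ (Finset.univ \ ({i, j} : Finset (Fin k))).card := Finset.card_le_card hsub
    _ = k - 2 := by
        rw [Finset.card_sdiff_of_subset (Finset.subset_univ _), Finset.card_univ, Fintype.card_fin]
        congr 1
        rw [Finset.card_insert_of_notMem (by simpa using hij), Finset.card_singleton]

/-- If `|I| ≥ 2` and there is no part `P l` with `I ∪ J ⊆ P l`, then the complex
`L_ψ` associated to `K_Π` and `ψ` is the full simplex `Δ[[m]]`: every subset of `[m]`
is a face of `L_ψ`. -/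
theorem Lpsi_KPi_full_simplex {m k : ℕ} (hk : 2 ≤ k) (P : Fin k → Finset (Fin m))
    (hne : ∀ i, (P i).Nonempty)
    (hdisj : ∀ i j, i ≠ j → Disjoint (P i) (P j))
    (hcov : Finset.univ.biUnion P = Finset.univ)
    (I J : Finset (Fin m)) (ψ : Fin m → Fin m) (hψ : IsFold I J ψ)
    (hI : 2 ≤ I.card) (hnl : ¬∃ l : Fin k, I ∪ J ⊆ P l)
    (F : Finset (Fin m)) :
    F ∈ LpsiFaces (KPiFaces P) I ψ := by
  classical
  obtain ⟨hIJ, hψJ, hψid, hsurj⟩ := hψ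
  set σ : Fin m → Finset (Fin m) := fun t => F ∩ insert t (I.filter fun w => ψ w = t) with hσ
  have hsub : ∀ t ∉ I, σ t ⊆ insert t (I.filter fun w => ψ w = t) :=
    fun t _ => Finset.inter_subset_right
  have hFeq : F = (Finset.univ \ I).biUnion σ := by
    ext v
    simp only [Finset.mem_biUnion, Finset.mem_sdiff, Finset.mem_univ, true_and, hσ,
      Finset.mem_inter, Finset.mem_insert, Finset.mem_filter]
    constructor
    · intro hv
      by_cases hvI : v ∈ I
      · exact ⟨ψ v, fun h => Finset.disjoint_left.mp hIJ h (hψJ v hvI), hv, Or.inr ⟨hvI, rfl⟩⟩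
      · exact ⟨v, hvI, hv, Or.inl rfl⟩
    · rintro ⟨t, _, hv, _⟩; exact hv
  set T := (Finset.univ \ I).filter (fun t => (σ t).Nonempty) with hT
  have hTI : ∀ t ∈ T, t ∉ I := by
    intro t ht
    simp only [hT, Finset.mem_filter, Finset.mem_sdiff] at ht
    exact ht.1.2
  have hTim : T.image ψ = T := by
    rw [Finset.image_congr (g := id) (fun t ht => hψid t (hTI t (Finset.mem_coe.mp ht))),
      Finset.image_id]
  have hpt : ∀ v : Fin m, ∃ i : Fin k, v ∈ P i := by
    intro v
    have : v ∈ Finset.univ.biUnion P := hcov.symm ▸ Finset.mem_univ v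
    simpa using this
  choose pt hptm using hpt
  have hpt_eq : ∀ v : Fin m, ∀ i : Fin k, v ∈ P i → pt v = i := by
    intro v i hvi
    by_contra h
    exact Finset.disjoint_left.mp (hdisj _ _ h) (hptm v) hvi
  obtain ⟨a, haI, b, hbI, hab⟩ := Finset.one_lt_card.mp hI
  refine ⟨σ, hsub, hFeq, ?_⟩
  by_cases hone : ∃ l, I ⊆ P l
  · obtain ⟨l, hl⟩ := hone
    push_neg at hnl
    obtain ⟨x, hxIJ, hxl⟩ := Finset.not_subset.mp (hnl l)
    have hxJ : x ∈ J := by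
      rcases Finset.mem_union.mp hxIJ with h | h
      · exact absurd (hl h) hxl
      · exact h
    have hxI : x ∉ I := fun h => Finset.disjoint_left.mp hIJ h hxJ
    have hll' : pt x ≠ l := fun h => hxl (h ▸ hptm x)
    by_cases hjT : x ∈ T
    · obtain ⟨w, hwI, hwψ⟩ := hsurj x hxJ
      refine ⟨insert w (T.erase x), ?_, ?_⟩
      · obtain ⟨a', ha'I, ha'w⟩ := Finset.exists_mem_ne hI w
        refine kpi_mem_of_two P hll' ?_ ?_
        · intro hs
          have hx' : x ∈ insert w (T.erase x) := hs (hptm x)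
          rcases Finset.mem_insert.mp hx' with h | h
          · exact hxI (h ▸ hwI)
          · exact (Finset.notMem_erase x T) h
        · intro hs
          have ha' : a' ∈ insert w (T.erase x) := hs (hl ha'I)
          rcases Finset.mem_insert.mp ha' with h | h
          · exact ha'w h
          · exact hTI a' (Finset.mem_of_mem_erase h) ha'I
      · have herase : (T.erase x).image ψ = T.erase x := by
          rw [Finset.image_congr (g := id)
            (fun t ht => hψid t (hTI t (Finset.mem_of_mem_erase (Finset.mem_coe.mp ht)))),
            Finset.image_id]
        rw [Finset.image_insert, hwψ, herase, Finset.insert_erase hjT]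
    · refine ⟨T, ?_, hTim.symm⟩
      refine kpi_mem_of_two P hll' ?_ ?_
      · exact fun hs => hjT (hs (hptm x))
      · exact fun hs => hTI a (hs (hl haI)) haI
  · push_neg at hone
    obtain ⟨b', hb'I, hb'⟩ := Finset.not_subset.mp (hone (pt a))
    have hne' : pt b' ≠ pt a := fun h => hb' (h ▸ hptm b')
    refine ⟨T, ?_, hTim.symm⟩
    refine kpi_mem_of_two P hne' ?_ ?_
    · exact fun hs => hTI b' (hs (hptm b')) hb'I
    · exact fun hs => hTI a (hs (hptm a)) haI
end

section
/- Let L be a simplicial complex on [m] and let K_1,…,K_m be simplicial complexes on [l_1],…,[l_m], respectively, and set [l] = [l_1] ⊔ ⋯ ⊔ [l_m]. Let ψ : I → J be a fold of [l] such that ψ(I ∩ [l_i]) ⊆ [l_i] for each i = 1,…,m. Then folding commutes with substitution: (L⟨K_1,…,K_m⟩)_{∇(I,J)} = L⟨(K_1)',…,(K_m)'⟩, where (K_i)' = (K_i)_{∇(I ∩ [l_i], ψ(I ∩ [l_i]))} is the fold of K_i under the restriction of ψ, with the convention (K_i)' = K_i when I ∩ [l_i] = ∅. -/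
open scoped Classical

/-- The substitution complex `L⟨S 1, …, S m⟩` on the disjoint union
`[l 1] ⊔ ⋯ ⊔ [l m]`: its faces are the disjoint unions `σ 1 ⊔ ⋯ ⊔ σ m` with `σ i`
a face of `S i` for every `i` and `{i | σ i ≠ ∅}` a face of `L`. -/
def substFaces {m : ℕ} {l : Fin m → ℕ} (L : Set (Finset (Fin m)))
    (S : ∀ i : Fin m, Set (Finset (Fin (l i)))) :
    Set (Finset ((j : Fin m) × Fin (l j))) :=
  {F | ∃ σ : ∀ i : Fin m, Finset (Fin (l i)),
    (∀ i, σ i ∈ S i) ∧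
    F = Finset.univ.biUnion (fun i => (σ i).image (Sigma.mk i)) ∧
    (Finset.univ.filter fun i => (σ i).Nonempty) ∈ L}

set_option maxHeartbeats 1000000 in
/-- Folding commutes with substitution: for a fold `ψ` of `[l] = [l 1] ⊔ ⋯ ⊔ [l m]`
which maps `I ∩ [l i]` into `[l i]` for each `i` (encoded by component maps `ψc i`
with `ψ ⟨i, x⟩ = ⟨i, ψc i x⟩`), the fold of the substitution complex
`L⟨K 1, …, K m⟩` equals the substitution `L⟨(K 1)', …, (K m)'⟩` of the folds
`(K i)'` of the `K i` under the restrictions of `ψ`. -/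
theorem fold_subst_comm {m : ℕ} {l : Fin m → ℕ} (L : Set (Finset (Fin m)))
    (K : ∀ i : Fin m, Set (Finset (Fin (l i))))
    (hL : IsComplex L) (hK : ∀ i, IsComplex (K i))
    (I J : Finset ((j : Fin m) × Fin (l j)))
    (ψ : ((j : Fin m) × Fin (l j)) → ((j : Fin m) × Fin (l j)))
    (hψ : IsFold I J ψ)
    (ψc : ∀ i : Fin m, Fin (l i) → Fin (l i))
    (hcomp : ∀ v : (j : Fin m) × Fin (l j), ψ v = ⟨v.1, ψc v.1 v.2⟩) :
    foldFaces (substFaces L K) ψ =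
      substFaces L (fun i => foldFaces (K i) (ψc i)) := by
  ext F
  constructor
  · rintro ⟨G, ⟨σ, hσK, rfl, hσL⟩, rfl⟩
    refine ⟨fun i => (σ i).image (ψc i), fun i => ⟨σ i, hσK i, rfl⟩, ?_, ?_⟩
    · ext ⟨i, x⟩
      simp [hcomp, Sigma.ext_iff]
      aesop
    · convert hσL using 2
      rename_i i
      simp [Finset.image_nonempty]
  · rintro ⟨σ, hσ, rfl, hσL⟩
    choose τ hτK hτ using hσ
    have hστ : σ = fun i => (τ i).image (ψc i) := funext hτ
    subst hστ
    refine ⟨Finset.univ.biUnion (fun i => (τ i).image (Sigma.mk i)), ⟨τ, hτK, rfl, ?_⟩, ?_⟩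
    · convert hσL using 2
      rename_i i
      simp [Finset.image_nonempty]
    · ext ⟨i, x⟩
      simp [hcomp, Sigma.ext_iff]
      aesop
end

section
/- Let m ≥ 3, let K_1,…,K_m be simplicial complexes on [l_1],…,[l_m], respectively, let Π = {{1},{2,…,m−1},{m}} be the 3-partition of [m], and set S_Π = K_Π⟨K_1,…,K_m⟩. Suppose ψ : [l_m] → [l_1] is an injection which is an isomorphism of K_m onto the full subcomplex of K_1 on ψ([l_m]); that is, for every σ ⊆ [l_m], σ is a face of K_m if and only if ψ(σ) is a face of K_1. Let I = [l_m] and J = ψ([l_m]). Then the fold of S_Π is the substitution into the boundary of a simplex: (S_Π)_{∇(I,J)} = ∂Δ⟨K_1,…,K_{m−1}⟩, where ∂Δ is the boundary of the simplex on m−1 vertices. -/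
open scoped Classical

/-- The three parts of the partition `Π = {{1}, {2, …, m−1}, {m}}` of `[m]`, where
`i0` is the first vertex and `iL` the last vertex of `[m]`. -/
def part3 (m : ℕ) (i0 iL : Fin m) : Fin 3 → Finset (Fin m)
  | 0 => {i0}
  | 1 => Finset.univ \ {i0, iL}
  | 2 => {iL}

/-- The identity complex `K_Π` for the `3`-partition `Π = {{1}, {2, …, m−1}, {m}}`:
`σ ⊆ [m]` is a face if and only if at most `1 = k − 2` of the three parts are
contained in `σ`. -/
def KPi3 (m : ℕ) (i0 iL : Fin m) : Set (Finset (Fin m)) :=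
  {σ | (Finset.univ.filter fun t : Fin 3 => part3 m i0 iL t ⊆ σ).card ≤ 1}

theorem mem_bu {m : ℕ} {l : Fin m → ℕ} (σ : ∀ i, Finset (Fin (l i))) (j : Fin m) (v : Fin (l j)) :
    (⟨j, v⟩ : Σ i, Fin (l i)) ∈ Finset.univ.biUnion (fun i => (σ i).image (Sigma.mk i)) ↔ v ∈ σ j := by
  simp only [Finset.mem_biUnion, Finset.mem_univ, Finset.mem_image, true_and]
  constructor
  · rintro ⟨a, w, hw, h⟩
    obtain ⟨rfl, h2⟩ := Sigma.mk.inj_iff.mp h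
    rwa [eq_of_heq h2] at hw
  · exact fun h => ⟨j, v, h, rfl⟩

theorem KPi3_pair {m : ℕ} (i0 iL : Fin m) (τ : Finset (Fin m)) (hτ : τ ∈ KPi3 m i0 iL)
    (t1 t2 : Fin 3) (hne : t1 ≠ t2) (h1 : part3 m i0 iL t1 ⊆ τ) (h2 : part3 m i0 iL t2 ⊆ τ) :
    False := by
  have hs : ({t1, t2} : Finset (Fin 3)) ⊆ Finset.univ.filter fun t => part3 m i0 iL t ⊆ τ := by
    intro t ht
    simp only [Finset.mem_insert, Finset.mem_singleton] at ht
    rcases ht with rfl | rfl <;> simp [h1, h2]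
  have := Finset.card_le_card hs
  rw [Finset.card_pair hne] at this
  exact absurd (le_trans this hτ) (by norm_num)


/-- If `ψ : [l m] → [l 1]` is an isomorphism of `K m` onto a full subcomplex of
`K 1`, and `I = [l m]`, `J = ψ([l m])`, then the fold of
`S_Π = K_Π⟨K 1, …, K m⟩` is `(S_Π)_{∇(I,J)} = ∂Δ⟨K 1, …, K (m−1)⟩`, the
substitution of `K 1, …, K (m−1)` into the boundary of the simplex on `m − 1`
vertices. -/
theorem fold_SPi_eq_subst_boundary {m : ℕ} (hm : 3 ≤ m) {l : Fin m → ℕ}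
    (i0 iL : Fin m) (hi0 : (i0 : ℕ) = 0) (hiL : (iL : ℕ) = m - 1)
    (K : ∀ i : Fin m, Set (Finset (Fin (l i)))) (hK : ∀ i, IsComplex (K i))
    (ψ : Fin (l iL) → Fin (l i0))
    (hinj : Function.Injective ψ)
    (hiso : ∀ σ : Finset (Fin (l iL)), σ ∈ K iL ↔ σ.image ψ ∈ K i0) :
    foldFaces (substFaces (KPi3 m i0 iL) K)
        (fun v => if h : v.1 = iL then
            ⟨i0, ψ (cast (congrArg (fun i => Fin (l i)) h) v.2)⟩
          else v) =
      substFaces {τ : Finset (Fin m) | τ ⊂ Finset.univ.erase iL} K := by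
  have hne : i0 ≠ iL := by
    intro h; rw [h, hiL] at hi0; omega
  set f : ((j : Fin m) × Fin (l j)) → ((j : Fin m) × Fin (l j)) :=
    (fun v => if h : v.1 = iL then
        ⟨i0, ψ (cast (congrArg (fun i => Fin (l i)) h) v.2)⟩
      else v) with hf
  have hfiL : ∀ v : Fin (l iL), f ⟨iL, v⟩ = ⟨i0, ψ v⟩ := by
    intro v; simp [hf]
  have hfne : ∀ (j : Fin m), j ≠ iL → ∀ (v : Fin (l j)), f ⟨j, v⟩ = ⟨j, v⟩ := by
    intro j hj v; simp [hf, hj]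
  ext F
  simp only [foldFaces, substFaces, Set.mem_setOf_eq]
  constructor
  · rintro ⟨G, ⟨σ, hσK, rfl, hτ⟩, rfl⟩
    set σ' : ∀ i : Fin m, Finset (Fin (l i)) :=
      Function.update (Function.update σ iL ∅) i0 (σ i0 ∪ (σ iL).image ψ) with hσ'
    have hσ'i0 : σ' i0 = σ i0 ∪ (σ iL).image ψ := Function.update_self _ _ _
    have hσ'iL : σ' iL = ∅ := by
      rw [hσ', Function.update_of_ne (Ne.symm hne), Function.update_self]
    have hσ'j : ∀ j, j ≠ i0 → j ≠ iL → σ' j = σ j := by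
      intro j h1 h2
      rw [hσ', Function.update_of_ne h1, Function.update_of_ne h2]
    have hAC : ¬((σ i0).Nonempty ∧ (σ iL).Nonempty) := by
      rintro ⟨hA, hC⟩
      refine KPi3_pair i0 iL _ hτ 0 2 (by decide) ?_ ?_ <;>
        simp [part3, Finset.singleton_subset_iff, Finset.mem_filter, hA, hC]
    have hσ'K : ∀ i, σ' i ∈ K i := by
      intro i
      by_cases h1 : i = i0
      · rw [h1, hσ'i0]
        by_cases hC : (σ iL).Nonempty
        · have hA : σ i0 = ∅ := Finset.not_nonempty_iff_eq_empty.mp fun h => hAC ⟨h, hC⟩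
          rw [hA, Finset.empty_union]
          exact (hiso _).mp (hσK iL)
        · rw [Finset.not_nonempty_iff_eq_empty.mp hC, Finset.image_empty,
            Finset.union_empty]
          exact hσK i0
      · by_cases h2 : i = iL
        · rw [h2, hσ'iL]; exact (hK iL).1
        · rw [hσ'j i h1 h2]; exact hσK i
    refine ⟨σ', hσ'K, ?_, ?_⟩
    · ext x
      obtain ⟨j, v⟩ := x
      rw [mem_bu]
      simp only [Finset.mem_image]
      constructor
      · rintro ⟨y, hy, hyx⟩
        obtain ⟨j', w⟩ := y
        rw [mem_bu] at hy
        by_cases hj' : j' = iL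
        · subst hj'
          rw [hfiL] at hyx
          obtain ⟨h1, h2⟩ := Sigma.mk.inj_iff.mp hyx
          subst h1
          rw [hσ'i0, Finset.mem_union]
          right
          rw [← eq_of_heq h2]
          exact Finset.mem_image_of_mem ψ hy
        · rw [hfne j' hj' w] at hyx
          obtain ⟨h1, h2⟩ := Sigma.mk.inj_iff.mp hyx
          subst h1
          rw [← eq_of_heq h2]
          by_cases h1 : j' = i0
          · subst h1; rw [hσ'i0, Finset.mem_union]; left; exact hy
          · rw [hσ'j j' h1 hj']; exact hy
      · intro hv
        by_cases hj : j = i0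
        · have hj' : i0 = j := hj.symm
          clear hj
          subst hj'
          rw [hσ'i0, Finset.mem_union] at hv
          rcases hv with h | h
          · exact ⟨⟨i0, v⟩, (mem_bu σ i0 v).mpr h, hfne i0 hne v⟩
          · obtain ⟨w, hw, rfl⟩ := Finset.mem_image.mp h
            exact ⟨⟨iL, w⟩, (mem_bu σ iL w).mpr hw, hfiL w⟩
        · have hjL : j ≠ iL := by
            intro h; subst h; rw [hσ'iL] at hv; exact absurd hv (Finset.notMem_empty v)
          rw [hσ'j j hj hjL] at hv
          exact ⟨⟨j, v⟩, (mem_bu σ j v).mpr hv, hfne j hjL v⟩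
    · have hsub : (Finset.univ.filter fun i => (σ' i).Nonempty) ⊆ Finset.univ.erase iL := by
        intro j hj
        rw [Finset.mem_filter] at hj
        rw [Finset.mem_erase]
        refine ⟨?_, Finset.mem_univ j⟩
        intro h
        rw [h, hσ'iL] at hj
        exact absurd hj.2 (by simp)
      refine Finset.ssubset_iff_subset_ne.mpr ⟨hsub, ?_⟩
      intro heq
      have hi0m : i0 ∈ Finset.univ.erase iL := Finset.mem_erase.mpr ⟨hne, Finset.mem_univ _⟩
      rw [← heq, Finset.mem_filter] at hi0m
      have hB : part3 m i0 iL 1 ⊆ Finset.univ.filter fun i => (σ i).Nonempty := by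
        intro x hx
        simp only [part3, Finset.mem_sdiff, Finset.mem_insert, Finset.mem_singleton,
          Finset.mem_univ, true_and, not_or] at hx
        have hx2 : x ∈ Finset.univ.erase iL := Finset.mem_erase.mpr ⟨hx.2, Finset.mem_univ _⟩
        rw [← heq, Finset.mem_filter] at hx2
        rw [Finset.mem_filter]
        refine ⟨Finset.mem_univ _, ?_⟩
        rw [← hσ'j x hx.1 hx.2]
        exact hx2.2
      have hv := hi0m.2
      rw [hσ'i0] at hv
      obtain ⟨a, ha⟩ := hv
      rw [Finset.mem_union] at ha
      rcases ha with hA | hC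
      · refine KPi3_pair i0 iL _ hτ 0 1 (by decide) ?_ hB
        simp [part3, Finset.singleton_subset_iff, Finset.mem_filter]
        exact ⟨a, hA⟩
      · obtain ⟨w, hw, -⟩ := Finset.mem_image.mp hC
        refine KPi3_pair i0 iL _ hτ 2 1 (by decide) ?_ hB
        simp [part3, Finset.singleton_subset_iff, Finset.mem_filter]
        exact ⟨w, hw⟩
  · rintro ⟨σ, hσK, rfl, hτ⟩
    have hiLe : σ iL = ∅ := by
      by_contra h
      have h1 : iL ∈ Finset.univ.filter fun i => (σ i).Nonempty :=
        Finset.mem_filter.mpr ⟨Finset.mem_univ _, Finset.nonempty_iff_ne_empty.mpr h⟩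
      have h2 := hτ.1 h1
      exact absurd h2 (by simp)
    have hfix : ∀ x ∈ Finset.univ.biUnion (fun i => (σ i).image (Sigma.mk i)), f x = x := by
      rintro ⟨j, v⟩ hx
      rw [mem_bu] at hx
      refine hfne j ?_ v
      intro h
      subst h
      rw [hiLe] at hx
      exact absurd hx (Finset.notMem_empty v)
    refine ⟨_, ⟨σ, hσK, rfl, ?_⟩, ?_⟩
    · rw [KPi3, Set.mem_setOf_eq]
      apply Finset.card_le_one.mpr
      intro a ha b hb
      simp only [Finset.mem_filter, Finset.mem_univ, true_and] at ha hb
      have hnotC : ¬(part3 m i0 iL 2 ⊆ Finset.univ.filter fun i => (σ i).Nonempty) := by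
        simp only [part3, Finset.singleton_subset_iff, Finset.mem_filter]
        rintro ⟨-, h⟩
        rw [hiLe] at h
        exact absurd h (by simp)
      have hnotAB : ¬(part3 m i0 iL 0 ⊆ (Finset.univ.filter fun i => (σ i).Nonempty) ∧
          part3 m i0 iL 1 ⊆ Finset.univ.filter fun i => (σ i).Nonempty) := by
        rintro ⟨h0, h1⟩
        apply hτ.ne
        refine Finset.Subset.antisymm hτ.subset ?_
        intro x hx
        rw [Finset.mem_erase] at hx
        by_cases hxi : x = i0
        · subst hxi
          exact h0 (by simp [part3])
        · exact h1 (by simp [part3, hxi, hx.1])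
      fin_cases a <;> fin_cases b <;> first | rfl | (exfalso; tauto)
    · rw [Finset.image_congr hfix, Finset.image_id']
end

section
/- Let m ≥ 3, let K_1,…,K_m be simplicial complexes on [l_1],…,[l_m], respectively, and let Π = {{1},{2,…,m−1},{m}} be the 3-partition of [m]. Then the substitution of K_1,…,K_m into the identity complex K_Π equals the substitution of K_1 ⊔ K_m, K_2,…,K_{m−1} into the boundary of the simplex on m−1 vertices: K_Π⟨K_1,…,K_m⟩ = ∂Δ⟨K_1 ⊔ K_m, K_2,…,K_{m−1}⟩, where K_1 ⊔ K_m denotes the disjoint union complex on [l_1] ⊔ [l_m] (whose faces are the faces of K_1 together with the faces of K_m) and it is substituted into the first vertex of ∂Δ. -/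
open scoped Classical

/-- The restriction of a subset `F` of the disjoint union `[l 1] ⊔ ⋯ ⊔ [l m]`
to its `i`-th part. -/
def proj {m : ℕ} {l : Fin m → ℕ} (i : Fin m)
    (F : Finset ((j : Fin m) × Fin (l j))) : Finset (Fin (l i)) :=
  Finset.univ.filter fun x => (⟨i, x⟩ : (j : Fin m) × Fin (l j)) ∈ F

/-- The complex `K i` on `[l i]`, regarded as a complex on the ambient disjoint union
`[l 1] ⊔ ⋯ ⊔ [l m]`: its faces are the subsets supported on the `i`-th part whose
restriction to that part is a face of `K i`. -/
def fiberFaces {m : ℕ} {l : Fin m → ℕ} (i : Fin m)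
    (Ki : Set (Finset (Fin (l i)))) : Set (Finset ((j : Fin m) × Fin (l j))) :=
  {F | (∀ v ∈ F, v.1 = i) ∧ proj i F ∈ Ki}

/-- The substitution complex `L⟨S t⟩_{t : α}` of complexes `S t` (given on a common
ambient vertex type `V`, with pairwise disjoint supports) into a complex `L` on the
index type `α`: its faces are the unions `⊔_{t} σ t` with `σ t` a face of `S t` for
every `t` and `{t | σ t ≠ ∅}` a face of `L`. -/
def substBlocks {α V : Type*} [Fintype α] [DecidableEq V]
    (L : Set (Finset α)) (S : α → Set (Finset V)) : Set (Finset V) :=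
  {F | ∃ σ : α → Finset V, (∀ t, σ t ∈ S t) ∧ F = Finset.univ.biUnion σ ∧
      (Finset.univ.filter fun t => (σ t).Nonempty) ∈ L}

section Aux
variable {m : ℕ} {l : Fin m → ℕ}

lemma mem_proj {i : Fin m} {F : Finset ((j : Fin m) × Fin (l j))}
    {x : Fin (l i)} : x ∈ proj i F ↔ (⟨i, x⟩ : (j : Fin m) × Fin (l j)) ∈ F := by
  simp [proj]

lemma proj_image (i : Fin m) (s : Finset (Fin (l i))) :
    proj i (s.image (Sigma.mk i)) = s := by
  ext x
  simp [mem_proj]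

lemma eq_biUnion_proj (F : Finset ((j : Fin m) × Fin (l j))) :
    F = Finset.univ.biUnion (fun i => (proj i F).image (Sigma.mk i)) := by
  ext ⟨i, x⟩
  simp only [Finset.mem_biUnion, Finset.mem_univ, true_and, Finset.mem_image]
  constructor
  · intro h; exact ⟨i, x, mem_proj.mpr h, rfl⟩
  · rintro ⟨j, y, hy, he⟩; cases he; exact mem_proj.mp hy

lemma image_mem_fiberFaces (i : Fin m) {Ki : Set (Finset (Fin (l i)))}
    {s : Finset (Fin (l i))} (h : s ∈ Ki) :
    s.image (Sigma.mk i) ∈ fiberFaces i Ki := by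
  constructor
  · rintro ⟨a, b⟩ hv
    obtain ⟨y, hy, he⟩ := Finset.mem_image.mp hv
    cases he; rfl
  · rwa [proj_image]

lemma proj_eq_empty' {i j : Fin m} {F : Finset ((k : Fin m) × Fin (l k))}
    (h : ∀ v ∈ F, v.1 = j) (hij : i ≠ j) : proj i F = ∅ := by
  ext x
  rw [mem_proj]
  simp only [Finset.notMem_empty, iff_false]
  intro hx
  exact hij (h _ hx)

lemma proj_empty (i : Fin m) : proj i (∅ : Finset ((j : Fin m) × Fin (l j))) = ∅ := by
  ext x
  simp [mem_proj]

end Aux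
/-- For `Π = {{1}, {2, …, m−1}, {m}}`, the substitution of `K 1, …, K m` into the
identity complex `K_Π` equals the substitution of `K 1 ⊔ K m, K 2, …, K (m−1)` into
the boundary `∂Δ` of the simplex on `m − 1` vertices, the disjoint union complex
`K 1 ⊔ K m` being substituted into the first vertex of `∂Δ`. -/
theorem subst_KPi3_eq_subst_boundary {m : ℕ} (hm : 3 ≤ m) {l : Fin m → ℕ}
    (i0 iL : Fin m) (hi0 : (i0 : ℕ) = 0) (hiL : (iL : ℕ) = m - 1)
    (K : ∀ i : Fin m, Set (Finset (Fin (l i)))) (hK : ∀ i, IsComplex (K i)) :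
    substFaces (KPi3 m i0 iL) K =
      substBlocks (α := Option {i : Fin m // i ≠ i0 ∧ i ≠ iL})
        {τ | τ ≠ Finset.univ}
        (fun t => match t with
          | none => fiberFaces i0 (K i0) ∪ fiberFaces iL (K iL)
          | some i => fiberFaces i.1 (K i.1)) := by
  have hm1 : i0 ≠ iL := by
    intro h
    apply_fun (Fin.val) at h
    omega
  ext F
  simp only [substFaces, substBlocks, Set.mem_setOf_eq]
  constructor
  · rintro ⟨σ, hσ, hF, hcard⟩
    rw [KPi3, Set.mem_setOf_eq] at hcard
    have hpair := Finset.card_le_one.mp hcard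
    set supp := Finset.univ.filter (fun i : Fin m => (σ i).Nonempty) with hsupp
    have hin0 : part3 m i0 iL 0 ⊆ supp ↔ (σ i0).Nonempty := by
      simp [part3, hsupp, Finset.singleton_subset_iff]
    have hin2 : part3 m i0 iL 2 ⊆ supp ↔ (σ iL).Nonempty := by
      simp [part3, hsupp, Finset.singleton_subset_iff]
    have hin1 : part3 m i0 iL 1 ⊆ supp ↔
        ∀ j : Fin m, j ≠ i0 → j ≠ iL → (σ j).Nonempty := by
      simp [part3, Finset.subset_iff, not_or, and_imp, hsupp]
    have hAC : ¬((σ i0).Nonempty ∧ (σ iL).Nonempty) := by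
      rintro ⟨h1, h2⟩
      have e := hpair 0 (Finset.mem_filter.mpr ⟨Finset.mem_univ _, hin0.mpr h1⟩)
        2 (Finset.mem_filter.mpr ⟨Finset.mem_univ _, hin2.mpr h2⟩)
      exact absurd e (by decide)
    refine ⟨fun t => match t with
      | none => (σ i0).image (Sigma.mk i0) ∪ (σ iL).image (Sigma.mk iL)
      | some j => (σ j.1).image (Sigma.mk j.1), ?_, ?_, ?_⟩
    · rintro (_ | ⟨j, hj0, hjL⟩)
      · by_cases hL : (σ iL).Nonempty
        · have h0 : σ i0 = ∅ := by
            rw [← Finset.not_nonempty_iff_eq_empty]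
            exact fun h => hAC ⟨h, hL⟩
          show _ ∈ fiberFaces i0 (K i0) ∪ fiberFaces iL (K iL)
          right
          simp only [h0, Finset.image_empty, Finset.empty_union]
          exact image_mem_fiberFaces iL (hσ iL)
        · have h0 : σ iL = ∅ := Finset.not_nonempty_iff_eq_empty.mp hL
          show _ ∈ fiberFaces i0 (K i0) ∪ fiberFaces iL (K iL)
          left
          simp only [h0, Finset.image_empty, Finset.union_empty]
          exact image_mem_fiberFaces i0 (hσ i0)
      · exact image_mem_fiberFaces j (hσ j)
    · rw [hF]
      apply Finset.Subset.antisymm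
      · refine Finset.biUnion_subset.mpr fun i _ => fun v hv => ?_
        by_cases h0 : i = i0
        · subst h0
          exact Finset.mem_biUnion.mpr ⟨none, Finset.mem_univ _, Finset.mem_union_left _ hv⟩
        by_cases hL : i = iL
        · subst hL
          exact Finset.mem_biUnion.mpr ⟨none, Finset.mem_univ _, Finset.mem_union_right _ hv⟩
        · exact Finset.mem_biUnion.mpr ⟨some ⟨i, h0, hL⟩, Finset.mem_univ _, hv⟩
      · rw [Finset.biUnion_subset]
        intro t _
        rcases t with _ | j
        · refine Finset.union_subset (fun v hv => ?_) (fun v hv => ?_)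
          · exact Finset.mem_biUnion.mpr ⟨i0, Finset.mem_univ _, hv⟩
          · exact Finset.mem_biUnion.mpr ⟨iL, Finset.mem_univ _, hv⟩
        · intro v hv
          exact Finset.mem_biUnion.mpr ⟨j.1, Finset.mem_univ _, hv⟩
    · intro heq
      rw [Finset.eq_univ_iff_forall] at heq
      have hall : ∀ t : Option {i : Fin m // i ≠ i0 ∧ i ≠ iL}, (match t with
        | none => (σ i0).image (Sigma.mk i0) ∪ (σ iL).image (Sigma.mk iL)
        | some j => (σ j.1).image (Sigma.mk j.1) : Finset ((i : Fin m) × Fin (l i))).Nonempty :=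
        fun t => (Finset.mem_filter.mp (heq t)).2
      have hB : (1 : Fin 3) ∈ Finset.univ.filter
          (fun t : Fin 3 => part3 m i0 iL t ⊆ supp) := by
        refine Finset.mem_filter.mpr ⟨Finset.mem_univ _, hin1.mpr fun j h1 h2 => ?_⟩
        have := hall (some ⟨j, h1, h2⟩)
        simpa using this
      have hor : (σ i0).Nonempty ∨ (σ iL).Nonempty := by
        obtain ⟨v, hv⟩ := hall none
        rcases Finset.mem_union.mp hv with h | h
        · obtain ⟨y, hy, -⟩ := Finset.mem_image.mp h
          exact Or.inl ⟨y, hy⟩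
        · obtain ⟨y, hy, -⟩ := Finset.mem_image.mp h
          exact Or.inr ⟨y, hy⟩
      rcases hor with hA | hC
      · have e := hpair 0 (Finset.mem_filter.mpr ⟨Finset.mem_univ _, hin0.mpr hA⟩) 1 hB
        exact absurd e (by decide)
      · have e := hpair 2 (Finset.mem_filter.mpr ⟨Finset.mem_univ _, hin2.mpr hC⟩) 1 hB
        exact absurd e (by decide)
  · rintro ⟨τ, hτ, hF, hne⟩
    have hvand : ∀ (j : Fin m) (x : Fin (l j)) (t : Option {i : Fin m // i ≠ i0 ∧ i ≠ iL}),
        (⟨j, x⟩ : (i : Fin m) × Fin (l i)) ∈ τ t →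
        (t = none ∧ (j = i0 ∨ j = iL)) ∨ (∃ h : j ≠ i0 ∧ j ≠ iL, t = some ⟨j, h⟩) := by
      intro j x t ht
      match t with
      | none =>
        left
        refine ⟨rfl, ?_⟩
        rcases hτ none with h | h
        · exact Or.inl (h.1 _ ht)
        · exact Or.inr (h.1 _ ht)
      | some s =>
        right
        have hs := (hτ (some s)).1 _ ht
        obtain ⟨a, ha⟩ := s
        dsimp at hs
        subst hs
        exact ⟨ha, rfl⟩
    have hproj0 : proj i0 F = proj i0 (τ none) := by
      ext x
      rw [mem_proj, mem_proj, hF]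
      simp only [Finset.mem_biUnion, Finset.mem_univ, true_and]
      constructor
      · rintro ⟨t, ht⟩
        rcases hvand i0 x t ht with ⟨rfl, -⟩ | ⟨⟨h1, -⟩, -⟩
        · exact ht
        · exact absurd rfl h1
      · exact fun h => ⟨none, h⟩
    have hprojL : proj iL F = proj iL (τ none) := by
      ext x
      rw [mem_proj, mem_proj, hF]
      simp only [Finset.mem_biUnion, Finset.mem_univ, true_and]
      constructor
      · rintro ⟨t, ht⟩
        rcases hvand iL x t ht with ⟨rfl, -⟩ | ⟨⟨-, h2⟩, -⟩
        · exact ht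
        · exact absurd rfl h2
      · exact fun h => ⟨none, h⟩
    have hprojmid : ∀ (j : Fin m) (h1 : j ≠ i0) (h2 : j ≠ iL),
        proj j F = proj j (τ (some ⟨j, h1, h2⟩)) := by
      intro j h1 h2
      ext x
      rw [mem_proj, mem_proj, hF]
      simp only [Finset.mem_biUnion, Finset.mem_univ, true_and]
      constructor
      · rintro ⟨t, ht⟩
        rcases hvand j x t ht with ⟨rfl, (rfl | rfl)⟩ | ⟨h, rfl⟩
        · exact absurd rfl h1
        · exact absurd rfl h2
        · exact ht
      · exact fun h => ⟨_, h⟩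
    refine ⟨fun i => proj i F, ?_, eq_biUnion_proj F, ?_⟩
    · intro i
      show proj i F ∈ K i
      by_cases h1 : i = i0
      · subst h1
        rw [hproj0]
        rcases hτ none with h | h
        · exact h.2
        · rw [proj_eq_empty' h.1 hm1]
          exact (hK _).1
      by_cases h2 : i = iL
      · subst h2
        rw [hprojL]
        rcases hτ none with h | h
        · rw [proj_eq_empty' h.1 (Ne.symm hm1)]
          exact (hK _).1
        · exact h.2
      · rw [hprojmid i h1 h2]
        exact (hτ (some ⟨i, h1, h2⟩)).2
    · rw [KPi3, Set.mem_setOf_eq]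
      set supp := Finset.univ.filter (fun i : Fin m => (proj i F).Nonempty) with hsupp
      have hin0 : part3 m i0 iL 0 ⊆ supp ↔ (proj i0 F).Nonempty := by
        simp [part3, hsupp, Finset.singleton_subset_iff]
      have hin2 : part3 m i0 iL 2 ⊆ supp ↔ (proj iL F).Nonempty := by
        simp [part3, hsupp, Finset.singleton_subset_iff]
      have hin1 : part3 m i0 iL 1 ⊆ supp ↔
          ∀ j : Fin m, j ≠ i0 → j ≠ iL → (proj j F).Nonempty := by
        simp [part3, Finset.subset_iff, not_or, and_imp, hsupp]
      have hAC : ¬((proj i0 F).Nonempty ∧ (proj iL F).Nonempty) := by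
        rintro ⟨hA, hC⟩
        rcases hτ none with h | h
        · rw [hprojL, proj_eq_empty' h.1 (Ne.symm hm1)] at hC
          exact absurd hC (by simp)
        · rw [hproj0, proj_eq_empty' h.1 hm1] at hA
          exact absurd hA (by simp)
      have hex : ∃ t, τ t = ∅ := by
        by_contra h
        push_neg at h
        apply hne
        refine Finset.eq_univ_iff_forall.mpr fun t => Finset.mem_filter.mpr
          ⟨Finset.mem_univ _, h t⟩
      obtain ⟨t, ht⟩ := hex
      refine Finset.card_le_one.mpr fun a ha b hb => ?_
      have ha' := (Finset.mem_filter.mp ha).2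
      have hb' := (Finset.mem_filter.mp hb).2
      match t, ht with
      | none, ht =>
        have hA : ¬(proj i0 F).Nonempty := by
          rw [hproj0, ht, proj_empty]; simp
        have hC : ¬(proj iL F).Nonempty := by
          rw [hprojL, ht, proj_empty]; simp
        have hne0 : ∀ c : Fin 3, part3 m i0 iL c ⊆ supp → c ≠ 0 := by
          intro c hc h
          subst h
          exact hA (hin0.mp hc)
        have hne2 : ∀ c : Fin 3, part3 m i0 iL c ⊆ supp → c ≠ 2 := by
          intro c hc h
          subst h
          exact hC (hin2.mp hc)
        exact (by decide : ∀ a b : Fin 3, a ≠ 0 → a ≠ 2 → b ≠ 0 → b ≠ 2 → a = b)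
          a b (hne0 a ha') (hne2 a ha') (hne0 b hb') (hne2 b hb')
      | some s, ht =>
        obtain ⟨j, hj1, hj2⟩ := s
        have hB : ¬ (part3 m i0 iL 1 ⊆ supp) := by
          intro h
          have := hin1.mp h j hj1 hj2
          rw [hprojmid j hj1 hj2, ht, proj_empty] at this
          exact absurd this (by simp)
        have hne1 : ∀ c : Fin 3, part3 m i0 iL c ⊆ supp → c ≠ 1 := by
          intro c hc h
          subst h
          exact hB hc
        by_contra hab
        rcases (by decide : ∀ a b : Fin 3, a ≠ b → a ≠ 1 → b ≠ 1 →
            (a = 0 ∧ b = 2) ∨ (a = 2 ∧ b = 0)) a b hab (hne1 a ha') (hne1 b hb') with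
          ⟨rfl, rfl⟩ | ⟨rfl, rfl⟩
        · exact hAC ⟨hin0.mp ha', hin2.mp hb'⟩
        · exact hAC ⟨hin0.mp hb', hin2.mp ha'⟩
end
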